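/- arXiv:2405.16643 — 3 statements merged into one kernel-verified Lean document; each statement's English description precedes it below -/
import Mathlib

section
/- Suppose Assumption 3 holds and there exist k > 0 and γ ∈ ∂ₖF(k,0) with γ < ρ (where ρ > 0). Then every increasing concave function V : ℝ₊₊ → ℝ satisfies the growth condition lim_{T→∞} e^{-ρT} V(k⁺(T,k̄)) = 0 for all k̄ > 0; that is, 𝒱 coincides with the set of all increasing concave real-valued functions on ℝ₊₊. -/
open MeasureTheory Real Set Filter Topology
open scoped ENNReal NNReal

noncomputable section

/- ## Basic analytic notions -/

/-- The positive part of an extended real number, as an element of `ℝ≥0∞`. -/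
def eposPart (x : EReal) : ℝ≥0∞ := if x = ⊤ then ⊤ else ENNReal.ofReal x.toReal

/-- `f` is absolutely continuous on `[a, b]`. -/
def AbsContOn (f : ℝ → ℝ) (a b : ℝ) : Prop :=
  ∀ ε > (0:ℝ), ∃ δ > (0:ℝ), ∀ n : ℕ, ∀ s t : Fin n → ℝ,
    (∀ i, a ≤ s i ∧ s i ≤ t i ∧ t i ≤ b) →
    (Pairwise fun i j => Disjoint (Set.Ioo (s i) (t i)) (Set.Ioo (s j) (t j))) →
    (∑ i, (t i - s i)) < δ → (∑ i, |f (t i) - f (s i)|) < ε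

/-- `f` is absolutely continuous on every compact subinterval of `ℝ₊`. -/
def LocAbsCont (f : ℝ → ℝ) : Prop := ∀ a b : ℝ, 0 ≤ a → a < b → AbsContOn f a b

/-- The set `W₁` of nonnegative locally integrable control paths. -/
def W1 : Set (ℝ → ℝ) := {c | (∀ t, 0 ≤ c t) ∧ ∀ T > (0:ℝ), IntegrableOn c (Set.Icc 0 T)}

/-- The set `W₂` of nonnegative measurable locally bounded control paths. -/
def W2 : Set (ℝ → ℝ) :=
  {c | (∀ t, 0 ≤ c t) ∧ Measurable c ∧ ∀ T > (0:ℝ), ∃ M : ℝ, ∀ t ∈ Set.Icc (0:ℝ) T, c t ≤ M}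

/-- Assumption 1: positive discount rate, and `W` is `W₁` or `W₂`. -/
def Assumption1 (ρ : ℝ) (W : Set (ℝ → ℝ)) : Prop := 0 < ρ ∧ (W = W1 ∨ W = W2)

def posOrth : Set (ℝ × ℝ) := {p | 0 ≤ p.1 ∧ 0 ≤ p.2}
def posOrthOpen : Set (ℝ × ℝ) := {p | 0 < p.1 ∧ 0 < p.2}

/-- The realized (real-valued) utility. -/
def ur (u : ℝ → ℝ → EReal) (c k : ℝ) : ℝ := (u c k).toReal
/-- The partial derivative `∂u/∂c`. -/
def ucDeriv (u : ℝ → ℝ → EReal) (c k : ℝ) : ℝ := deriv (fun c' => ur u c' k) c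
/-- The partial derivative `∂u/∂k`. -/
def ukDeriv (u : ℝ → ℝ → EReal) (c k : ℝ) : ℝ := deriv (fun k' => ur u c k') k

/-- Assumption 2 on the instantaneous utility function `u : ℝ₊² → ℝ ∪ {-∞}`. -/
structure Assumption2 (u : ℝ → ℝ → EReal) : Prop where
  ne_top : ∀ c k : ℝ, u c k ≠ ⊤
  cont : ContinuousOn (fun p : ℝ × ℝ => u p.1 p.2) posOrth
  concave : ∀ c₁ k₁ c₂ k₂ t : ℝ, 0 ≤ c₁ → 0 ≤ k₁ → 0 ≤ c₂ → 0 ≤ k₂ → 0 ≤ t → t ≤ 1 →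
    ((1 - t : ℝ) : EReal) * u c₁ k₁ + (t : EReal) * u c₂ k₂ ≤
      u ((1 - t) * c₁ + t * c₂) ((1 - t) * k₁ + t * k₂)
  mono : ∀ c₁ k₁ c₂ k₂ : ℝ, 0 ≤ c₁ → 0 ≤ k₁ → c₁ ≤ c₂ → k₁ ≤ k₂ → u c₁ k₁ ≤ u c₂ k₂
  strictMono_c : ∀ k c₁ c₂ : ℝ, 0 < k → 0 < c₁ → c₁ < c₂ → u c₁ k < u c₂ k
  ne_bot_pos : ∀ c k : ℝ, 0 < c → 0 < k → u c k ≠ ⊥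
  smooth : ContDiffOn ℝ 1 (fun p : ℝ × ℝ => ur u p.1 p.2) posOrthOpen
  ne_bot_zero : ∃ c > (0:ℝ), u c 0 ≠ ⊥

/-- Assumption 3 on the technology function `F : ℝ₊² → ℝ` (with `F k c`). -/
structure Assumption3 (W : Set (ℝ → ℝ)) (F : ℝ → ℝ → ℝ) : Prop where
  cont : ContinuousOn (fun p : ℝ × ℝ => F p.1 p.2) posOrth
  concave : ConcaveOn ℝ posOrth (fun p : ℝ × ℝ => F p.1 p.2)
  zero : F 0 0 = 0
  anti_c : ∀ k c₁ c₂ : ℝ, 0 ≤ k → 0 ≤ c₁ → c₁ < c₂ → F k c₂ < F k c₁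
  lower : ∃ d₁ > (0:ℝ), ∃ δ₂ : ℝ → ℝ, (∀ c : ℝ, 0 ≤ c → 0 ≤ δ₂ c) ∧ δ₂ 0 = 0 ∧
    (∀ c₁ c₂ : ℝ, 0 ≤ c₁ → c₁ < c₂ → δ₂ c₁ < δ₂ c₂) ∧
    (∀ k c : ℝ, 0 < k → 0 ≤ c → -d₁ * k - δ₂ c < F k c) ∧
    (W = W1 → ∃ d₂ : ℝ, 0 ≤ d₂ ∧ ∀ c : ℝ, 0 ≤ c → δ₂ c = d₂ * c)
  productive : ∀ c : ℝ, 0 ≤ c → ∃ k > (0:ℝ), F 0 c < F k c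

/-- Assumption 4 on the marginal utility of consumption. -/
structure Assumption4 (u : ℝ → ℝ → EReal) : Prop where
  anti : ∀ k c₁ c₂ : ℝ, 0 < k → 0 < c₁ → c₁ < c₂ → ucDeriv u c₂ k < ucDeriv u c₁ k
  tendsto_zero : ∀ k > (0:ℝ), Tendsto (fun c => ucDeriv u c k) (𝓝[>] (0:ℝ)) atTop
  tendsto_top : ∀ k > (0:ℝ), Tendsto (fun c => ucDeriv u c k) atTop (𝓝 0)
  k_bounded : ∀ k > (0:ℝ), ∃ M : ℝ, ∀ᶠ c in 𝓝[>] (0:ℝ), ukDeriv u c k ≤ M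

/-- The CRRA (constant relative risk aversion) function. -/
def crra (θ x : ℝ) : ℝ := if θ = 1 then Real.log x else (x ^ (1 - θ) - 1) / (1 - θ)

/-- The CRRA function extended to `x = 0` with value `-∞` when `θ ≥ 1`. -/
def crraE (θ x : ℝ) : EReal :=
  if 0 < x then ((crra θ x : ℝ) : EReal)
  else if θ < 1 then ((-1 / (1 - θ) : ℝ) : EReal) else ⊥

/-- Assumption 5 with explicit parameters. -/
structure Assumption5Data (ρ : ℝ) (u : ℝ → ℝ → EReal) (F : ℝ → ℝ → ℝ)
    (kstar cstar γ δ θ a b C : ℝ) : Prop where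
  kstar_pos : 0 < kstar
  cstar_nonneg : 0 ≤ cstar
  gamma_pos : 0 < γ
  delta_pos : 0 < δ
  theta_pos : 0 < θ
  a_pos : 0 < a
  b_nonneg : 0 ≤ b
  subdiff : ∀ k c : ℝ, 0 ≤ k → 0 ≤ c →
    F k c - F kstar cstar ≤ γ * (k - kstar) - δ * (c - cstar)
  rate : 0 < ρ - (1 - θ) * γ
  bound : ∀ c k : ℝ, 0 < c → 0 < k →
    u c k ≤ ((a * crra θ c + b * crra θ k + C : ℝ) : EReal)

/-- Assumption 5. -/
def Assumption5 (ρ : ℝ) (u : ℝ → ℝ → EReal) (F : ℝ → ℝ → ℝ) : Prop :=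
  ∃ kstar cstar γ δ θ a b C : ℝ, Assumption5Data ρ u F kstar cstar γ δ θ a b C

/-- The partial derivative `∂F/∂c`. -/
def FcDeriv (F : ℝ → ℝ → ℝ) (k c : ℝ) : ℝ := deriv (fun c' => F k c') c
/-- The mixed partial derivative `∂²F/∂k∂c`. -/
def FckDeriv (F : ℝ → ℝ → ℝ) (k c : ℝ) : ℝ := deriv (fun k' => FcDeriv F k' c) k
/-- The right partial derivative `D_{k,+}F(k,c)` of the concave function `k ↦ F(k,c)`. -/
def rightDerivK (F : ℝ → ℝ → ℝ) (k c : ℝ) : ℝ :=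
  sSup {r : ℝ | ∃ t > (0:ℝ), r = (F (k + t) c - F k c) / t}

/-- Assumption 6. -/
structure Assumption6 (ρ : ℝ) (u : ℝ → ℝ → EReal) (F : ℝ → ℝ → ℝ) : Prop where
  smooth : ∃ ε₀ > (0:ℝ),
    (∀ c > (0:ℝ), ContDiffOn ℝ 1 (fun k => ucDeriv u c k) (Set.Ioo 0 ε₀)) ∧
    ∃ H : ℝ → ℝ → ℝ,
      ContDiffOn ℝ 1 (fun p : ℝ × ℝ => H p.1 p.2) (Set.Ioo 0 ε₀ ×ˢ Set.Ioi 0) ∧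
      (∀ k c : ℝ, k ∈ Set.Ioo 0 ε₀ → 0 < c → 0 < deriv (fun k' => H k' c) k) ∧
      (∀ k c : ℝ, k ∈ Set.Ioo 0 ε₀ → 0 < c → deriv (fun c' => H k c') c < 0) ∧
      (∀ k c : ℝ, k ∈ Set.Ioo 0 ε₀ → 0 < c → H k c ≠ 0 →
        ∃ ε > (0:ℝ),
          (∀ p ∈ Metric.ball ((k, c) : ℝ × ℝ) ε,
            HasDerivAt (fun c' => F p.1 c') (FcDeriv F p.1 p.2) p.2) ∧
          ContinuousOn (fun p : ℝ × ℝ => FcDeriv F p.1 p.2) (Metric.ball ((k, c) : ℝ × ℝ) ε) ∧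
          (∀ p ∈ Metric.ball ((k, c) : ℝ × ℝ) ε,
            HasDerivAt (fun k' => FcDeriv F k' p.2) (FckDeriv F p.1 p.2) p.1) ∧
          ContinuousOn (fun p : ℝ × ℝ => FckDeriv F p.1 p.2) (Metric.ball ((k, c) : ℝ × ℝ) ε))
  steep : ∃ k > (0:ℝ), ∃ r : ℝ, ρ < r ∧ ∀ c : ℝ, 0 ≤ c → r ≤ rightDerivK F k c

/- ## Payoffs and the value function -/

/-- The discounted utility flow `e^{-ρt} u(c(t), k(t))`, as an extended real. -/
def discounted (ρ : ℝ) (u : ℝ → ℝ → EReal) (k c : ℝ → ℝ) (t : ℝ) : EReal :=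
  ((Real.exp (-ρ * t) : ℝ) : EReal) * u (c t) (k t)

def payoffPos (ρ : ℝ) (u : ℝ → ℝ → EReal) (k c : ℝ → ℝ) : ℝ≥0∞ :=
  ∫⁻ t in Set.Ioi (0:ℝ), eposPart (discounted ρ u k c t)

def payoffNeg (ρ : ℝ) (u : ℝ → ℝ → EReal) (k c : ℝ → ℝ) : ℝ≥0∞ :=
  ∫⁻ t in Set.Ioi (0:ℝ), eposPart (-(discounted ρ u k c t))

/-- `∫₀^∞ e^{-ρt} u(c(t),k(t)) dt` can be defined (possibly `±∞`). -/
def PayoffDefined (ρ : ℝ) (u : ℝ → ℝ → EReal) (k c : ℝ → ℝ) : Prop :=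
  payoffPos ρ u k c ≠ ⊤ ∨ payoffNeg ρ u k c ≠ ⊤

/-- `∫₀^∞ e^{-ρt} u(c(t),k(t)) dt`, as an extended real. -/
def payoff (ρ : ℝ) (u : ℝ → ℝ → EReal) (k c : ℝ → ℝ) : EReal :=
  (payoffPos ρ u k c : EReal) - (payoffNeg ρ u k c : EReal)

/-- `∫₀^T e^{-ρt} u(c(t),k(t)) dt`, as an extended real. -/
def payoffUpTo (ρ : ℝ) (u : ℝ → ℝ → EReal) (k c : ℝ → ℝ) (T : ℝ) : EReal :=
  ((∫⁻ t in Set.Ioc (0:ℝ) T, eposPart (discounted ρ u k c t) : ℝ≥0∞) : EReal) -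
  ((∫⁻ t in Set.Ioc (0:ℝ) T, eposPart (-(discounted ρ u k c t)) : ℝ≥0∞) : EReal)

/-- The admissible pairs of problem (1) with initial capital `kbar`. -/
structure Admissible (ρ : ℝ) (W : Set (ℝ → ℝ)) (u : ℝ → ℝ → EReal) (F : ℝ → ℝ → ℝ)
    (kbar : ℝ) (k c : ℝ → ℝ) : Prop where
  locAC : LocAbsCont k
  mem_W : c ∈ W
  k_nonneg : ∀ t : ℝ, 0 ≤ t → 0 ≤ k t
  c_nonneg : ∀ t : ℝ, 0 ≤ t → 0 ≤ c t
  defined : PayoffDefined ρ u k c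
  init : k 0 = kbar
  ode : ∀ᵐ t : ℝ, 0 < t → HasDerivAt k (F (k t) (c t)) t

/-- The value function of problem (1). -/
def Vbar (ρ : ℝ) (W : Set (ℝ → ℝ)) (u : ℝ → ℝ → EReal) (F : ℝ → ℝ → ℝ) (kbar : ℝ) : EReal :=
  sSup {x : EReal | ∃ k c : ℝ → ℝ, Admissible ρ W u F kbar k c ∧ x = payoff ρ u k c}

/-- The value function, realized as a real-valued function. -/
def VbarR (ρ : ℝ) (W : Set (ℝ → ℝ)) (u : ℝ → ℝ → EReal) (F : ℝ → ℝ → ℝ) (kbar : ℝ) : ℝ :=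
  (Vbar ρ W u F kbar).toReal

/-- The value function is finite. -/
def VbarFinite (ρ : ℝ) (W : Set (ℝ → ℝ)) (u : ℝ → ℝ → EReal) (F : ℝ → ℝ → ℝ) : Prop :=
  ∀ k : ℝ, 0 < k → Vbar ρ W u F k ≠ ⊤ ∧ Vbar ρ W u F k ≠ ⊥

/- ## The HJB equation -/

/-- The Hamiltonian `sup_{c ≥ 0} {F(k,c)p + u(c,k)}`. -/
def Ham (u : ℝ → ℝ → EReal) (F : ℝ → ℝ → ℝ) (k p : ℝ) : EReal :=
  ⨆ c : {c : ℝ // 0 ≤ c}, (((F k c.1 * p : ℝ) : EReal) + u c.1 k)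

def IsViscositySubsolution (ρ : ℝ) (u : ℝ → ℝ → EReal) (F : ℝ → ℝ → ℝ) (V : ℝ → ℝ) : Prop :=
  UpperSemicontinuousOn V (Set.Ioi 0) ∧
  ∀ k : ℝ, 0 < k → ∀ φ : ℝ → ℝ, ∀ δ > (0:ℝ), Metric.ball k δ ⊆ Set.Ioi 0 →
    ContDiffOn ℝ 1 φ (Metric.ball k δ) → φ k = V k →
    (∀ x ∈ Metric.ball k δ, φ x ≤ V x) →
    Ham u F k (deriv φ k) ≤ ((ρ * V k : ℝ) : EReal)

def IsViscositySupersolution (ρ : ℝ) (u : ℝ → ℝ → EReal) (F : ℝ → ℝ → ℝ) (V : ℝ → ℝ) : Prop :=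
  LowerSemicontinuousOn V (Set.Ioi 0) ∧
  ∀ k : ℝ, 0 < k → ∀ φ : ℝ → ℝ, ∀ δ > (0:ℝ), Metric.ball k δ ⊆ Set.Ioi 0 →
    ContDiffOn ℝ 1 φ (Metric.ball k δ) → φ k = V k →
    (∀ x ∈ Metric.ball k δ, V x ≤ φ x) →
    ((ρ * V k : ℝ) : EReal) ≤ Ham u F k (deriv φ k)

def IsViscositySolution (ρ : ℝ) (u : ℝ → ℝ → EReal) (F : ℝ → ℝ → ℝ) (V : ℝ → ℝ) : Prop :=
  ContinuousOn V (Set.Ioi 0) ∧ IsViscositySubsolution ρ u F V ∧ IsViscositySupersolution ρ u F V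

/-- `V` is a classical (continuously differentiable) solution to the HJB equation on `ℝ₊₊`. -/
def IsClassicalSolution (ρ : ℝ) (u : ℝ → ℝ → EReal) (F : ℝ → ℝ → ℝ) (V : ℝ → ℝ) : Prop :=
  (∀ k : ℝ, 0 < k → DifferentiableAt ℝ V k) ∧ ContinuousOn (deriv V) (Set.Ioi 0) ∧
  ∀ k : ℝ, 0 < k → Ham u F k (deriv V k) = ((ρ * V k : ℝ) : EReal)

/- ## Subdifferentials -/

/-- The subdifferential (superdifferential) of a concave function `G` on the set `S`. -/
def subdiffOn (G : ℝ → ℝ) (S : Set ℝ) (x : ℝ) : Set ℝ :=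
  {p : ℝ | ∀ y ∈ S, G y - G x ≤ p * (y - x)}

/- ## ODEs and differential inclusions -/

/-- A positive solution of the autonomous ODE `k' = h(k)`, `k(0) = kbar`, on the interval `I`. -/
structure SolvesODEOn (h : ℝ → ℝ) (kbar : ℝ) (k : ℝ → ℝ) (I : Set ℝ) : Prop where
  locAC : ∀ a b : ℝ, a ∈ I → b ∈ I → a < b → AbsContOn k a b
  init : k 0 = kbar
  pos : ∀ t ∈ I, 0 < k t
  hasDeriv : ∀ᵐ t : ℝ, t ∈ I → HasDerivAt k (h (k t)) t

/-- A positive solution of the differential inclusion `k' ∈ Γ(k)`, `k(0) = kbar`, on `I`. -/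
structure SolvesInclOn (Γ : ℝ → Set ℝ) (kbar : ℝ) (k : ℝ → ℝ) (I : Set ℝ) : Prop where
  locAC : ∀ a b : ℝ, a ∈ I → b ∈ I → a < b → AbsContOn k a b
  init : k 0 = kbar
  pos : ∀ t ∈ I, 0 < k t
  hasDeriv : ∀ᵐ t : ℝ, t ∈ I → ∃ d ∈ Γ (k t), HasDerivAt k d t

/-- The pure accumulation path with initial value `kbar`. -/
def IsPurePath (F : ℝ → ℝ → ℝ) (kbar : ℝ) (k : ℝ → ℝ) : Prop :=
  SolvesODEOn (fun x => F x 0) kbar k (Set.Ici 0)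

/-- The growth condition (7). -/
def GrowthCondition (ρ : ℝ) (F : ℝ → ℝ → ℝ) (V : ℝ → ℝ) : Prop :=
  ∀ kbar : ℝ, 0 < kbar → ∀ kp : ℝ → ℝ, IsPurePath F kbar kp →
    Tendsto (fun T => Real.exp (-ρ * T) * V (kp T)) atTop (𝓝 0)

/-- Membership in the space `𝒱` of increasing concave functions satisfying the growth
condition. -/
def memV (ρ : ℝ) (F : ℝ → ℝ → ℝ) (V : ℝ → ℝ) : Prop :=
  StrictMonoOn V (Set.Ioi 0) ∧ ConcaveOn ℝ (Set.Ioi 0) V ∧ GrowthCondition ρ F V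

/- ## The maximizing consumption selection and the optimal differential inclusion -/

/-- `cs` is the positive continuous maximizer function `c*(p,k)` of Proposition 1. -/
def IsMaxSelection (u : ℝ → ℝ → EReal) (F : ℝ → ℝ → ℝ) (cs : ℝ → ℝ → ℝ) : Prop :=
  (∀ p k : ℝ, 0 < p → 0 < k → 0 < cs p k) ∧
  ContinuousOn (fun q : ℝ × ℝ => cs q.1 q.2) posOrthOpen ∧
  ∀ p k : ℝ, 0 < p → 0 < k →
    ((F k (cs p k) * p : ℝ) : EReal) + u (cs p k) k = Ham u F k p

/-- The set `F(k, c*(∂V(k), k))`. -/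
def inclSet (F : ℝ → ℝ → ℝ) (cs : ℝ → ℝ → ℝ) (V : ℝ → ℝ) (k : ℝ) : Set ℝ :=
  {d : ℝ | ∃ p ∈ subdiffOn V (Set.Ioi 0) k, d = F k (cs p k)}

/-- `limsup_{n → ∞} n (k(t + 1/n) - k(t))`. -/
def forwardSlope (k : ℝ → ℝ) (t : ℝ) : ℝ :=
  Filter.limsup (fun n : ℕ => (n : ℝ) * (k (t + 1 / (n : ℝ)) - k t)) Filter.atTop

/-- The consumption path (13): `c(t)` is the element of `c*(∂V(k(t)), k(t))` closest to
`limsup_{n} n (k(t+1/n) - k(t))`. -/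
def IsClosestConsumption (F : ℝ → ℝ → ℝ) (cs : ℝ → ℝ → ℝ) (V : ℝ → ℝ)
    (k : ℝ → ℝ) (c : ℝ → ℝ) : Prop :=
  ∀ t : ℝ, 0 ≤ t →
    (∃ p ∈ subdiffOn V (Set.Ioi 0) (k t), c t = cs p (k t)) ∧
    ∀ p ∈ subdiffOn V (Set.Ioi 0) (k t),
      |forwardSlope k t - c t| ≤ |forwardSlope k t - cs p (k t)|

/-- Membership in the class `B_k̄`. -/
structure MemB (ρ : ℝ) (W : Set (ℝ → ℝ)) (u : ℝ → ℝ → EReal) (F : ℝ → ℝ → ℝ)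
    (kbar : ℝ) (k c : ℝ → ℝ) : Prop where
  locAC : LocAbsCont k
  mem_W : c ∈ W
  k_nonneg : ∀ t : ℝ, 0 ≤ t → 0 ≤ k t
  c_nonneg : ∀ t : ℝ, 0 ≤ t → 0 ≤ c t
  lim_exists : ∃ L : ℝ, Tendsto (fun T => payoffUpTo ρ u k c T) atTop (𝓝 ((L : ℝ) : EReal))
  init : k 0 = kbar
  ode : ∀ᵐ t : ℝ, 0 < t → HasDerivAt k (F (k t) (c t)) t

/- ## Quantities appearing in Lemma 4 -/

def khat (F : ℝ → ℝ → ℝ) (kstar cstar γ δ kbar : ℝ) : ℝ :=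
  kbar - kstar + (δ * cstar + F kstar cstar) / γ

def CstarConst (ρ θ γ δ kh : ℝ) : ℝ := (ρ - (1 - θ) * γ) / (θ * δ) * kh

def V3val (ρ θ γ Cs : ℝ) : ℝ :=
  if θ = 1 then Real.log Cs / ρ + (γ - ρ) / ρ ^ 2
  else Cs ^ (1 - θ) * θ / ((1 - θ) * (ρ - (1 - θ) * γ)) - 1 / (ρ * (1 - θ))

def V4val (ρ θ γ kh : ℝ) : ℝ :=
  if θ = 1 then Real.log kh / ρ + γ / ρ ^ 2
  else kh ^ (1 - θ) / ((1 - θ) * (ρ - (1 - θ) * γ)) - 1 / (ρ * (1 - θ))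

/- ## Carathéodory equations (Lemma 3) -/

/-- Carathéodory's condition for `h(t,x)` relative to the region `U`. -/
def Caratheodory (h : ℝ → ℝ → ℝ) (U : Set (ℝ × ℝ)) : Prop :=
  (∀ t : ℝ, ContinuousOn (fun x => h t x) {x : ℝ | (t, x) ∈ U}) ∧
  (∀ x : ℝ, Measurable (fun t => h t x))

/-- `h(t,x)` is Lipschitz in `x` on `U`. -/
def LipschitzInSnd (h : ℝ → ℝ → ℝ) (U : Set (ℝ × ℝ)) : Prop :=
  ∃ L > (0:ℝ), ∀ t x₁ x₂ : ℝ, (t, x₁) ∈ U → (t, x₂) ∈ U → |h t x₁ - h t x₂| ≤ L * |x₁ - x₂|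

/-- A solution on `[0,T]` of `k' = h(t,k)`, `k(0) = kbar`, with graph in `U`. -/
structure CaraSolOn (h : ℝ → ℝ → ℝ) (U : Set (ℝ × ℝ)) (kbar T : ℝ) (k : ℝ → ℝ) : Prop where
  ac : AbsContOn k 0 T
  init : k 0 = kbar
  graph : ∀ t ∈ Set.Icc (0:ℝ) T, (t, k t) ∈ U
  hasDeriv : ∀ᵐ t : ℝ, t ∈ Set.Icc (0:ℝ) T → HasDerivAt k (h t (k t)) t

/- ## The Ramsey–Cass–Koopmans specialization -/

def ur0 (u0 : ℝ → EReal) (c : ℝ) : ℝ := (u0 c).toReal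

/-- Assumption 2' on a one-variable utility function. -/
structure Assumption2' (u0 : ℝ → EReal) : Prop where
  ne_top : ∀ c : ℝ, u0 c ≠ ⊤
  cont : ContinuousOn u0 (Set.Ici 0)
  concave : ∀ c₁ c₂ t : ℝ, 0 ≤ c₁ → 0 ≤ c₂ → 0 ≤ t → t ≤ 1 →
    ((1 - t : ℝ) : EReal) * u0 c₁ + (t : EReal) * u0 c₂ ≤ u0 ((1 - t) * c₁ + t * c₂)
  strictMono : ∀ c₁ c₂ : ℝ, 0 ≤ c₁ → c₁ < c₂ → u0 c₁ < u0 c₂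
  ne_bot_pos : ∀ c : ℝ, 0 < c → u0 c ≠ ⊥
  smooth : ContDiffOn ℝ 1 (ur0 u0) (Set.Ioi 0)
  anti : ∀ c₁ c₂ : ℝ, 0 < c₁ → c₁ < c₂ → deriv (ur0 u0) c₂ < deriv (ur0 u0) c₁
  tendsto_zero : Tendsto (fun c => deriv (ur0 u0) c) (𝓝[>] (0:ℝ)) atTop
  tendsto_top : Tendsto (fun c => deriv (ur0 u0) c) atTop (𝓝 0)

/-- Assumption 3' on a production function `f` and the depreciation rate `d`. -/
structure Assumption3' (f : ℝ → ℝ) (d : ℝ) : Prop where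
  nonneg : ∀ k : ℝ, 0 ≤ k → 0 ≤ f k
  cont : ContinuousOn f (Set.Ici 0)
  concave : ConcaveOn ℝ (Set.Ici 0) f
  strictMono : StrictMonoOn f (Set.Ici 0)
  zero : f 0 = 0
  d_nonneg : 0 ≤ d
  productive : ∃ k > (0:ℝ), d * k < f k

/-- The Inada condition. -/
def InadaCondition (f : ℝ → ℝ) : Prop :=
  (∀ k : ℝ, 0 < k → DifferentiableAt ℝ f k) ∧ ContinuousOn (deriv f) (Set.Ioi 0) ∧
  StrictConcaveOn ℝ (Set.Ici 0) f ∧ deriv f '' Set.Ioi 0 = Set.Ioi 0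

/-- The utility function of the RCK model, as a function of `(c, k)`. -/
def rckU (u0 : ℝ → EReal) : ℝ → ℝ → EReal := fun c _ => u0 c

/-- The technology function of the RCK model. -/
def rckF (f : ℝ → ℝ) (d : ℝ) : ℝ → ℝ → ℝ := fun k c => f k - d * k - c



lemma AbsContOn.modulus {k : ℝ → ℝ} {a b : ℝ} (h : AbsContOn k a b) :
    ∀ ε > (0:ℝ), ∃ δ > (0:ℝ), ∀ x y, a ≤ x → x ≤ y → y ≤ b → y - x < δ → |k y - k x| < ε := by
  intro ε hε
  obtain ⟨δ, hδ, H⟩ := h ε hε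
  refine ⟨δ, hδ, fun x y hax hxy hyb hd => ?_⟩
  have := H 1 (fun _ => x) (fun _ => y) (fun _ => ⟨hax, hxy, hyb⟩)
    (Subsingleton.pairwise) (by simpa using hd)
  simpa using this

lemma key_upper {k : ℝ → ℝ} {a b M : ℝ} (hab : a < b) (hAC : AbsContOn k a b)
    (hae : ∀ᵐ t, t ∈ Set.Ioo a b → ∃ d ≤ M, HasDerivAt k d t) :
    k b - k a ≤ M * (b - a) := by
  have main : ∀ ε > (0:ℝ), k b - k a ≤ M * (b - a) + ε * (b - a + 3) := by
    intro ε hε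
    obtain ⟨δ₀, hδ₀, HAC⟩ := hAC ε hε
    set Mε := M + ε with hMε
    set δ : ℝ := min δ₀ (ε / (|Mε| + 1)) with hδdef
    have hδ : 0 < δ := lt_min hδ₀ (div_pos hε (by positivity))
    set κ : ℝ → ℝ := fun t => k t - Mε * (t - a) with hκ
    set N : Set ℝ := {t | ¬ (t ∈ Set.Ioo a b → ∃ d ≤ M, HasDerivAt k d t)} ∪ {a} with hN
    have hNnull : volume N = 0 := measure_union_null hae (measure_singleton a)
    obtain ⟨U, hUN, hUopen, hUvol⟩ := Set.exists_isOpen_lt_of_lt N (ENNReal.ofReal δ)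
      (by rw [hNnull]; exact ENNReal.ofReal_pos.2 hδ)
    set S : Set ℝ := {x | x ∈ Set.Icc a b ∧ ∀ η > (0:ℝ), ∃ (n : ℕ) (s t : Fin n → ℝ),
      (∀ i, a ≤ s i ∧ s i ≤ t i ∧ t i ≤ x) ∧
      (Pairwise fun i j => Disjoint (Set.Ioo (s i) (t i)) (Set.Ioo (s j) (t j))) ∧
      (∀ i, Set.Icc (s i) (t i) ⊆ U) ∧
      κ x - κ a ≤ (∑ i, |κ (t i) - κ (s i)|) + η} with hS
    have haS : a ∈ S := by
      refine ⟨⟨le_refl a, hab.le⟩, fun η hη => ⟨0, Fin.elim0, Fin.elim0, ?_, ?_, ?_, ?_⟩⟩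
      · exact fun i => i.elim0
      · exact Subsingleton.pairwise
      · exact fun i => i.elim0
      · simp [le_of_lt hη]
    have hSne : S.Nonempty := ⟨a, haS⟩
    have hSbdd : BddAbove S := ⟨b, fun x hx => hx.1.2⟩
    set c := sSup S with hc
    have hacb : c ∈ Set.Icc a b := ⟨le_csSup hSbdd haS, csSup_le hSne fun x hx => hx.1.2⟩
    have hκmod : ∀ η > (0:ℝ), ∃ r > (0:ℝ), ∀ x y, a ≤ x → x ≤ y → y ≤ b → y - x < r →
        |κ y - κ x| < η := by
      intro η hη
      obtain ⟨r₀, hr₀, Hm⟩ := AbsContOn.modulus hAC (η/2) (by linarith)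
      refine ⟨min r₀ (η / (2 * (|Mε| + 1))), lt_min hr₀ (by positivity), fun x y hax hxy hyb hr => ?_⟩
      have h1 : |k y - k x| < η/2 := Hm x y hax hxy hyb (lt_of_lt_of_le hr (min_le_left _ _))
      have h2 : |Mε * (y - a) - Mε * (x - a)| ≤ |Mε| * (y - x) := by
        rw [← mul_sub]
        have he : (y - a) - (x - a) = y - x := by ring
        rw [he, abs_mul, abs_of_nonneg (sub_nonneg.2 hxy)]
      have h3 : |Mε| * (y - x) < η/2 := by
        have hr2 : y - x < η / (2 * (|Mε| + 1)) := lt_of_lt_of_le hr (min_le_right _ _)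
        calc |Mε| * (y - x) ≤ (|Mε| + 1) * (y - x) := by nlinarith [abs_nonneg Mε, sub_nonneg.2 hxy]
          _ < (|Mε| + 1) * (η / (2 * (|Mε| + 1))) := by
              apply mul_lt_mul_of_pos_left hr2 (by positivity)
          _ = η/2 := by field_simp
      calc |κ y - κ x| = |(k y - k x) - (Mε * (y - a) - Mε * (x - a))| := by
            simp only [hκ]; ring_nf
        _ ≤ |k y - k x| + |Mε * (y - a) - Mε * (x - a)| := abs_sub _ _
        _ < η/2 + η/2 := by linarith
        _ = η := by ring
    have hcS : c ∈ S := by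
      refine ⟨hacb, fun η hη => ?_⟩
      obtain ⟨r, hr, Hr⟩ := hκmod (η/2) (by linarith)
      obtain ⟨x, hxS, hxc⟩ := exists_lt_of_lt_csSup hSne (by linarith : c - r < c)
      have hxle : x ≤ c := le_csSup hSbdd hxS
      obtain ⟨n, s, t, h1, h2, h3, h4⟩ := hxS.2 (η/2) (by linarith)
      refine ⟨n, s, t, fun i => ⟨(h1 i).1, (h1 i).2.1, le_trans (h1 i).2.2 hxle⟩, h2, h3, ?_⟩
      have hcont : |κ c - κ x| < η/2 := Hr x c hxS.1.1 hxle hacb.2 (by linarith)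
      obtain ⟨hl, hu⟩ := abs_le.1 hcont.le
      calc κ c - κ a = (κ c - κ x) + (κ x - κ a) := by ring
        _ ≤ η/2 + ((∑ i, |κ (t i) - κ (s i)|) + η/2) := add_le_add hu h4
        _ = (∑ i, |κ (t i) - κ (s i)|) + η := by ring
    have hcb : c = b := by
      by_contra hne
      have hcblt : c < b := lt_of_le_of_ne hacb.2 hne
      by_cases hcU : c ∈ U
      · obtain ⟨r, hr, hball⟩ := Metric.isOpen_iff.1 hUopen c hcU
        set h := min (r/2) (b - c) with hh
        have hhr : h ≤ r/2 := min_le_left _ _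
        have hhb : h ≤ b - c := min_le_right _ _
        have hhpos : 0 < h := lt_min (by linarith) (by linarith)
        have hsub : Set.Icc c (c + h) ⊆ U := by
          intro z hz
          apply hball
          rw [Metric.mem_ball, Real.dist_eq, abs_lt]
          exact ⟨by linarith [hz.1], by linarith [hz.2]⟩
        have hxS : c + h ∈ S := by
          refine ⟨⟨by linarith [hacb.1], by linarith⟩, fun η hη => ?_⟩
          obtain ⟨n, s, t, h1, h2, h3, h4⟩ := hcS.2 η hη
          have hdisj : ∀ (i' : Fin n), Disjoint (Set.Ioo (s i') (t i')) (Set.Ioo c (c+h)) :=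
            fun i' => Set.disjoint_left.2 fun z hz hz' =>
              absurd (lt_of_lt_of_le hz.2 (h1 i').2.2) (not_lt.2 hz'.1.le)
          refine ⟨n+1, Fin.snoc s c, Fin.snoc t (c+h), ?_, ?_, ?_, ?_⟩
          · intro i
            rcases Fin.eq_castSucc_or_eq_last i with ⟨j, rfl⟩ | rfl
            · simp only [Fin.snoc_castSucc]
              exact ⟨(h1 j).1, (h1 j).2.1, by linarith [(h1 j).2.2]⟩
            · simp only [Fin.snoc_last]
              exact ⟨hacb.1, by linarith, le_refl _⟩
          · intro i j hij
            rcases Fin.eq_castSucc_or_eq_last i with ⟨i', rfl⟩ | rfl <;>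
              rcases Fin.eq_castSucc_or_eq_last j with ⟨j', rfl⟩ | rfl
            · simp only [Fin.snoc_castSucc]
              exact h2 (fun hc' => hij (by rw [hc']))
            · simp only [Fin.snoc_castSucc, Fin.snoc_last]
              exact hdisj i'
            · simp only [Fin.snoc_castSucc, Fin.snoc_last]
              exact (hdisj j').symm
            · exact absurd rfl hij
          · intro i
            rcases Fin.eq_castSucc_or_eq_last i with ⟨j, rfl⟩ | rfl
            · simp only [Fin.snoc_castSucc]; exact h3 j
            · simp only [Fin.snoc_last]; exact hsub
          · rw [Fin.sum_univ_castSucc]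
            simp only [Fin.snoc_castSucc, Fin.snoc_last]
            have habs : κ (c+h) - κ c ≤ |κ (c+h) - κ c| := le_abs_self _
            have he : κ (c+h) - κ a = (κ (c+h) - κ c) + (κ c - κ a) := by ring
            linarith
        linarith [le_csSup hSbdd hxS]
      · have hcN : c ∉ N := fun hin => hcU (hUN hin)
        have hca : c ≠ a := by
          intro h; exact hcN (Or.inr (by rw [h]; exact rfl))
        have hcIoo : c ∈ Set.Ioo a b := ⟨lt_of_le_of_ne hacb.1 (Ne.symm hca), hcblt⟩
        have hgood : ∃ d ≤ M, HasDerivAt k d c := by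
          have hnn : c ∉ {t : ℝ | ¬ (t ∈ Set.Ioo a b → ∃ d ≤ M, HasDerivAt k d t)} :=
            fun h => hcN (Or.inl h)
          exact not_not.1 hnn hcIoo
        obtain ⟨d, hdM, hder⟩ := hgood
        have h2 : Tendsto (slope k c) (𝓝[>] c) (𝓝 d) :=
          (hasDerivAt_iff_tendsto_slope.1 hder).mono_left
            (nhdsWithin_mono c fun x hx => ne_of_gt hx)
        have hslope : ∀ᶠ x in 𝓝[>] c, slope k c x < Mε :=
          h2 (Iio_mem_nhds (by rw [hMε]; linarith))
        obtain ⟨u, hu, Hr⟩ := mem_nhdsGT_iff_exists_Ioo_subset.1 hslope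
        set x' := min ((c+u)/2) ((c+b)/2) with hx'
        have hux : c < u := hu
        have hcx' : c < x' := lt_min (by linarith) (by linarith)
        have hx'u : x' < u := lt_of_le_of_lt (min_le_left _ _) (by linarith)
        have hx'b : x' < b := lt_of_le_of_lt (min_le_right _ _) (by linarith)
        have hHr : slope k c x' < Mε := Hr ⟨hcx', hx'u⟩
        have hkx' : k x' - k c < Mε * (x' - c) := by
          rw [slope_def_field] at hHr
          exact (div_lt_iff₀ (by linarith)).1 hHr
        have hκx' : κ x' ≤ κ c := by
          simp only [hκ]; nlinarith
        have hx'S : x' ∈ S := by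
          refine ⟨⟨by linarith [hacb.1], hx'b.le⟩, fun η hη => ?_⟩
          obtain ⟨n, s, t, h1, h2', h3, h4⟩ := hcS.2 η hη
          refine ⟨n, s, t, fun i => ⟨(h1 i).1, (h1 i).2.1, by linarith [(h1 i).2.2]⟩, h2', h3, ?_⟩
          linarith
        linarith [le_csSup hSbdd hx'S]
    -- endgame
    obtain ⟨n, s, t, h1, h2, h3, h4⟩ := hcS.2 ε hε
    have hts : ∀ i, 0 ≤ t i - s i := fun i => sub_nonneg.2 (h1 i).2.1
    have hlen : (∑ i, (t i - s i)) < δ := by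
      have hmeas : (∑ i, volume (Set.Ioo (s i) (t i))) ≤ volume U := by
        rw [← tsum_fintype (L := SummationFilter.unconditional _), ← measure_iUnion h2 (fun i => measurableSet_Ioo)]
        exact measure_mono (Set.iUnion_subset fun i =>
          subset_trans Set.Ioo_subset_Icc_self (h3 i))
      have hofr : ENNReal.ofReal (∑ i, (t i - s i)) < ENNReal.ofReal δ := by
        rw [ENNReal.ofReal_sum_of_nonneg (fun i _ => hts i)]
        refine lt_of_le_of_lt ?_ (lt_of_le_of_lt hmeas hUvol)
        apply le_of_eq
        congr 1
        ext i
        exact (Real.volume_Ioo).symm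
      exact (ENNReal.ofReal_lt_ofReal_iff_of_nonneg (Finset.sum_nonneg fun i _ => hts i)).1 hofr
    have hsum_k : (∑ i, |k (t i) - k (s i)|) < ε :=
      HAC n s t (fun i => ⟨(h1 i).1, (h1 i).2.1, hcb ▸ (h1 i).2.2⟩) h2
        (lt_of_lt_of_le hlen (min_le_left _ _))
    have hsum_κ : (∑ i, |κ (t i) - κ (s i)|) ≤
        (∑ i, |k (t i) - k (s i)|) + |Mε| * (∑ i, (t i - s i)) := by
      rw [Finset.mul_sum, ← Finset.sum_add_distrib]
      refine Finset.sum_le_sum fun i _ => ?_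
      have he : κ (t i) - κ (s i) = (k (t i) - k (s i)) - Mε * (t i - s i) := by
        simp only [hκ]; ring
      rw [he]
      refine le_trans (abs_sub _ _) ?_
      rw [abs_mul, abs_of_nonneg (hts i)]
    have hML : |Mε| * (∑ i, (t i - s i)) ≤ ε := by
      have hL0 : 0 ≤ (∑ i, (t i - s i)) := Finset.sum_nonneg fun i _ => hts i
      have hδε : δ ≤ ε / (|Mε| + 1) := min_le_right _ _
      have h5 : |Mε| * (∑ i, (t i - s i)) ≤ |Mε| * δ :=
        mul_le_mul_of_nonneg_left hlen.le (abs_nonneg _)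
      have h6 : |Mε| * δ ≤ ε := by
        have : |Mε| * δ ≤ |Mε| * (ε / (|Mε| + 1)) :=
          mul_le_mul_of_nonneg_left hδε (abs_nonneg _)
        have h7 : |Mε| * (ε / (|Mε| + 1)) ≤ ε := by
          rw [mul_div_assoc']
          rw [div_le_iff₀ (by positivity)]
          nlinarith [abs_nonneg Mε]
        linarith
      linarith
    have hfinal : κ b - κ a ≤ (∑ i, |κ (t i) - κ (s i)|) + ε := hcb ▸ h4
    have hκba : κ b - κ a = k b - k a - Mε * (b - a) := by simp only [hκ]; ring
    rw [hκba] at hfinal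
    have : k b - k a ≤ Mε * (b - a) + ε + ε + ε := by linarith
    rw [hMε] at this
    linarith [this]
  refine le_of_forall_pos_le_add fun η hη => ?_
  have hba : 0 < b - a + 3 := by linarith
  have h := main (η / (b - a + 3)) (by positivity)
  have : (η / (b - a + 3)) * (b - a + 3) = η := by field_simp
  linarith

lemma key_lower {k : ℝ → ℝ} {a b m : ℝ} (hab : a < b) (hAC : AbsContOn k a b)
    (hae : ∀ᵐ t, t ∈ Set.Ioo a b → ∃ d, m ≤ d ∧ HasDerivAt k d t) :
    m * (b - a) ≤ k b - k a := by
  have hACn : AbsContOn (fun t => -(k t)) a b := by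
    intro ε hε
    obtain ⟨δ, hδ, H⟩ := hAC ε hε
    refine ⟨δ, hδ, fun n s t h1 h2 h3 => ?_⟩
    have := H n s t h1 h2 h3
    calc (∑ i, |-(k (t i)) - -(k (s i))|) = ∑ i, |k (t i) - k (s i)| := by
          refine Finset.sum_congr rfl fun i _ => ?_
          rw [← abs_neg]; ring_nf
      _ < ε := this
  have hk2 := key_upper (k := fun t => -(k t)) (M := -m) hab hACn ?_
  · have hk3 : -(k b) - -(k a) ≤ -m * (b - a) := hk2
    linarith
  · filter_upwards [hae] with t ht hti
    obtain ⟨d, hdm, hder⟩ := ht hti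
    exact ⟨-d, by linarith, hder.neg⟩

lemma locAC_continuousOn {k : ℝ → ℝ}
    (h : ∀ a b : ℝ, a ∈ Set.Ici (0:ℝ) → b ∈ Set.Ici (0:ℝ) → a < b → AbsContOn k a b) :
    ContinuousOn k (Set.Ici 0) := by
  intro x hx
  have hAC : AbsContOn k 0 (x + 1) := h 0 (x+1) (Set.mem_Ici.2 le_rfl) (Set.mem_Ici.2 (by linarith [hx.out])) (by linarith [hx.out])
  rw [Metric.continuousWithinAt_iff]
  intro ε hε
  obtain ⟨δ, hδ, H⟩ := AbsContOn.modulus hAC ε hε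
  refine ⟨min δ 1, lt_min hδ one_pos, fun y hy hd => ?_⟩
  have hy0 : (0:ℝ) ≤ y := hy.out
  have hx0 : (0:ℝ) ≤ x := hx.out
  rw [Real.dist_eq] at hd ⊢
  have hd1 : |y - x| < δ := lt_of_lt_of_le hd (min_le_left _ _)
  have hd2 : |y - x| < 1 := lt_of_lt_of_le hd (min_le_right _ _)
  rcases le_total y x with hyx | hxy
  · have := H y x hy0 hyx (by linarith) (by rw [abs_of_nonpos (by linarith)] at hd1; linarith)
    rwa [abs_sub_comm]
  · exact H x y hx0 hxy (by rw [abs_of_nonneg (by linarith)] at hd2; linarith)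
      (by rw [abs_of_nonneg (by linarith)] at hd1; linarith)

lemma gronwall_upper {k d : ℝ → ℝ} {kbar β A' : ℝ}
    (hk0 : k 0 = kbar) (hkbar : 0 < kbar) (hβ : 0 ≤ β) (hA' : 0 ≤ A')
    (hAC : ∀ a b : ℝ, a ∈ Set.Ici (0:ℝ) → b ∈ Set.Ici (0:ℝ) → a < b → AbsContOn k a b)
    (hae : ∀ᵐ t, t ∈ Set.Ici (0:ℝ) → HasDerivAt k (d t) t)
    (hd : ∀ t ∈ Set.Ici (0:ℝ), d t ≤ β * k t + A') :
    ∀ T : ℝ, 0 ≤ T → k T ≤ (kbar + 1 + (A' + 2) * T) * Real.exp (β * T) := by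
  set y : ℝ → ℝ := fun T => (kbar + 1 + (A' + 2) * T) * Real.exp (β * T) with hy
  have hy' : ∀ t : ℝ, HasDerivAt y ((A' + 2) * Real.exp (β * t) + β * y t) t := by
    intro t
    have h1 : HasDerivAt (fun T : ℝ => kbar + 1 + (A' + 2) * T) (A' + 2) t := by
      simpa using ((hasDerivAt_id t).const_mul (A' + 2)).const_add (kbar + 1)
    have h2 : HasDerivAt (fun T : ℝ => Real.exp (β * T)) (β * Real.exp (β * t)) t := by
      simpa [mul_comm, Function.comp_def] using (Real.hasDerivAt_exp (β * t)).comp t ((hasDerivAt_id t).const_mul β)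
    have := h1.mul h2
    refine this.congr_deriv ?_
    simp only [hy]
    ring
  have hyc : Continuous y := by
    apply Continuous.mul
    · exact continuous_const.add (continuous_const.mul continuous_id)
    · exact Real.continuous_exp.comp (continuous_const.mul continuous_id)
  have hkcont : ContinuousOn k (Set.Ici 0) := locAC_continuousOn hAC
  intro T hT
  by_contra hcon
  push_neg at hcon
  -- the set where k ≥ y on [0, T]
  set C : Set ℝ := {t | t ∈ Set.Icc 0 T ∧ y t ≤ k t} with hC
  have hCclosed : IsClosed C := by
    have h1 : ContinuousOn (fun t => k t - y t) (Set.Icc 0 T) :=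
      (hkcont.mono (Set.Icc_subset_Ici_self)).sub hyc.continuousOn
    have h2 : C = Set.Icc 0 T ∩ (fun t => k t - y t) ⁻¹' (Set.Ici 0) :=
      Set.ext fun z => ⟨fun h => ⟨h.1, Set.mem_Ici.2 (sub_nonneg.2 h.2)⟩,
        fun h => ⟨h.1, sub_nonneg.1 (Set.mem_Ici.1 h.2)⟩⟩
    rw [h2]
    exact h1.preimage_isClosed_of_isClosed isClosed_Icc isClosed_Ici
  have hCne : C.Nonempty := ⟨T, ⟨⟨hT, le_refl T⟩, hcon.le⟩⟩
  have hCbdd : BddBelow C := ⟨0, fun z hz => hz.1.1⟩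
  set τ := sInf C with hτ
  have hτC : τ ∈ C := IsClosed.csInf_mem hCclosed hCne hCbdd
  have hτ0 : 0 ≤ τ := hτC.1.1
  have hτpos : 0 < τ := by
    rcases lt_or_eq_of_le hτ0 with h | h
    · exact h
    · exfalso
      have h2 := hτC.2
      rw [← h] at h2
      rw [hk0] at h2
      simp only [hy, mul_zero, Real.exp_zero, mul_one, add_zero] at h2
      linarith
  have hkτ : y τ ≤ k τ := hτC.2
  -- choose σ close below τ
  have hycont : ContinuousAt y τ := hyc.continuousAt
  set e : ℝ := 1 / (2 * (β + 1)) with he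
  have hepos : 0 < e := by positivity
  have hev2 : ∀ᶠ t in 𝓝 τ, |y t - y τ| < e :=
    hycont.eventually (eventually_abs_sub_lt (y τ) hepos)
  obtain ⟨r2, hr2, Hr2⟩ := Metric.eventually_nhds_iff.1 hev2
  set σ := τ - min r2 τ / 2 with hσ
  have hminpos : 0 < min r2 τ := lt_min hr2 hτpos
  have hστ : σ < τ := by simp only [hσ]; linarith
  have hσ0 : 0 ≤ σ := by
    have : min r2 τ ≤ τ := min_le_right _ _
    simp only [hσ]; linarith
  have hIcc : ∀ t, σ ≤ t → t ≤ τ → |y t - y τ| < e := by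
    intro t h1t h2t
    have hd : dist t τ < r2 := by
      rw [Real.dist_eq, abs_of_nonpos (by linarith)]
      have h3 : min r2 τ ≤ r2 := min_le_left _ _
      simp only [hσ] at h1t
      linarith
    exact Hr2 hd
  have hnotC : ∀ t, σ ≤ t → t < τ → k t < y t := by
    intro t h1t h2t
    by_contra hge
    have htC : t ∈ C := ⟨⟨by linarith, by linarith [hτC.1.2]⟩, not_lt.1 hge⟩
    linarith [csInf_le hCbdd htC]
  obtain ⟨M, hM⟩ : ∃ M : ℝ, M = β * y τ + A' + 1/2 := ⟨_, rfl⟩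
  -- derivative bound on [σ, τ]
  have hkey : k τ - k σ ≤ M * (τ - σ) := by
    refine key_upper hστ (hAC σ τ (Set.mem_Ici.2 hσ0) (Set.mem_Ici.2 hτ0) hστ) ?_
    filter_upwards [hae] with t ht hti
    have ht0 : (0:ℝ) ≤ t := by linarith [hti.1, hσ0]
    refine ⟨d t, ?_, ht (Set.mem_Ici.2 ht0)⟩
    have h1 : d t ≤ β * k t + A' := hd t (Set.mem_Ici.2 ht0)
    have h2 : |y t - y τ| < e := hIcc t hti.1.le hti.2.le
    have hkt : k t < y t := hnotC t hti.1.le hti.2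
    have h3 : β * k t ≤ β * y τ + 1/2 := by
      have hyt : y t < y τ + e := by linarith [(abs_lt.1 h2).2]
      have hb : β * k t ≤ β * (y τ + e) := mul_le_mul_of_nonneg_left (by linarith) hβ
      have hbe : β * e ≤ 1/2 := by
        rw [he, mul_one_div, div_le_iff₀ (by positivity)]
        linarith
      nlinarith
    rw [hM]
    linarith
  -- y grows at least M + 1 on [σ, τ]
  have hyMVT : ∃ ξ ∈ Set.Ioo σ τ, ((A' + 2) * Real.exp (β * ξ) + β * y ξ) = (y τ - y σ) / (τ - σ) := by
    have := exists_hasDerivAt_eq_slope y (fun t => (A' + 2) * Real.exp (β * t) + β * y t) hστ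
      hyc.continuousOn (fun x _ => hy' x)
    obtain ⟨ξ, hξ, heq⟩ := this
    exact ⟨ξ, hξ, heq⟩
  obtain ⟨ξ, hξ, heq⟩ := hyMVT
  have hyξ : (A' + 2) * Real.exp (β * ξ) + β * y ξ ≥ M + 1 := by
    have hξ0 : 0 ≤ ξ := by linarith [hξ.1, hσ0]
    have hexp : (1:ℝ) ≤ Real.exp (β * ξ) := by
      rw [← Real.exp_zero]
      exact Real.exp_le_exp.2 (by positivity)
    have h2 : |y ξ - y τ| < e := hIcc ξ hξ.1.le hξ.2.le
    have h3 : β * y ξ ≥ β * y τ - 1/2 := by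
      have := (abs_lt.1 h2).1
      have hb : β * (y τ - y ξ) ≤ β * e := mul_le_mul_of_nonneg_left (by linarith) hβ
      have hbe : β * e ≤ 1/2 := by
        rw [he, mul_one_div, div_le_iff₀ (by positivity)]
        linarith
      nlinarith
    have h4 : (A' + 2) * Real.exp (β * ξ) ≥ A' + 2 := by
      nlinarith
    rw [hM]
    linarith
  have hyτσ : y τ - y σ ≥ (M + 1) * (τ - σ) := by
    have hpos : τ - σ > 0 := by linarith
    have hsl : (y τ - y σ) / (τ - σ) ≥ M + 1 := heq ▸ hyξ
    calc y τ - y σ = ((y τ - y σ) / (τ - σ)) * (τ - σ) := by field_simp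
      _ ≥ (M + 1) * (τ - σ) := mul_le_mul_of_nonneg_right hsl hpos.le
  -- σ not in C
  have hσC : σ ∉ C := fun hmem => absurd (csInf_le hCbdd hmem) (not_le.2 hστ)
  have hσlt : k σ < y σ := by
    by_contra hge
    exact hσC ⟨⟨hσ0, by linarith [hτC.1.2]⟩, not_lt.1 hge⟩
  linarith [hkτ, hkey, hyτσ, hσlt, hστ]

lemma stay_above {k d : ℝ → ℝ} {m : ℝ}
    (hm : 0 < m) (hinit : m ≤ k 0)
    (hAC : ∀ a b : ℝ, a ∈ Set.Ici (0:ℝ) → b ∈ Set.Ici (0:ℝ) → a < b → AbsContOn k a b)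
    (hae : ∀ᵐ t, t ∈ Set.Ici (0:ℝ) → HasDerivAt k (d t) t)
    (hd : ∀ t ∈ Set.Ici (0:ℝ), k t ≤ m → 0 ≤ d t) :
    ∀ T : ℝ, 0 ≤ T → m ≤ k T := by
  intro T hT
  by_contra hcon
  push_neg at hcon
  have hkcont : ContinuousOn k (Set.Ici 0) := locAC_continuousOn hAC
  have hT0 : 0 < T := by
    rcases lt_or_eq_of_le hT with h | h
    · exact h
    · exfalso; rw [← h] at hcon; linarith
  set C : Set ℝ := {t | t ∈ Set.Icc 0 T ∧ m ≤ k t} with hC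
  have hCclosed : IsClosed C := by
    have h1 : ContinuousOn (fun t => k t - m) (Set.Icc 0 T) :=
      (hkcont.mono Set.Icc_subset_Ici_self).sub continuousOn_const
    have h2 : C = Set.Icc 0 T ∩ (fun t => k t - m) ⁻¹' (Set.Ici 0) :=
      Set.ext fun z => ⟨fun h => ⟨h.1, Set.mem_Ici.2 (sub_nonneg.2 h.2)⟩,
        fun h => ⟨h.1, sub_nonneg.1 (Set.mem_Ici.1 h.2)⟩⟩
    rw [h2]
    exact h1.preimage_isClosed_of_isClosed isClosed_Icc isClosed_Ici
  have hCne : C.Nonempty := ⟨0, ⟨⟨le_refl 0, hT⟩, hinit⟩⟩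
  have hCbdd : BddAbove C := ⟨T, fun z hz => hz.1.2⟩
  set τ := sSup C with hτ
  have hτC : τ ∈ C := IsClosed.csSup_mem hCclosed hCne hCbdd
  have hτ0 : 0 ≤ τ := hτC.1.1
  have hτT : τ < T := by
    rcases lt_or_eq_of_le hτC.1.2 with h | h
    · exact h
    · exfalso; rw [h] at hτC; linarith [hτC.2]
  have hnotin : ∀ t, τ < t → t ≤ T → k t < m := by
    intro t h1t h2t
    by_contra hge
    have : t ∈ C := ⟨⟨by linarith, h2t⟩, not_lt.1 hge⟩
    linarith [le_csSup hCbdd this]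
  have hkey : (0:ℝ) * (T - τ) ≤ k T - k τ := by
    refine key_lower hτT (hAC τ T (Set.mem_Ici.2 hτ0) (Set.mem_Ici.2 hT) hτT) ?_
    filter_upwards [hae] with t ht hti
    have ht0 : (0:ℝ) ≤ t := by linarith [hti.1]
    refine ⟨d t, ?_, ht (Set.mem_Ici.2 ht0)⟩
    exact hd t (Set.mem_Ici.2 ht0) (hnotin t hti.1 hti.2.le).le
  rw [zero_mul] at hkey
  linarith [hτC.2]

/-- **Lemma 2.** If `γ ∈ ∂ₖF(k,0)` for some `k > 0` with `γ < ρ`, then `𝒱` coincides with the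
set of all increasing concave real-valued functions on `ℝ₊₊`. -/
theorem growth_condition_automatic (ρ : ℝ) (W : Set (ℝ → ℝ)) (F : ℝ → ℝ → ℝ)
    (hρ : 0 < ρ) (hA3 : Assumption3 W F)
    (hγ : ∃ k : ℝ, 0 < k ∧ ∃ γ ∈ subdiffOn (fun x => F x 0) (Set.Ici 0) k, γ < ρ) :
    ∀ V : ℝ → ℝ,
      memV ρ F V ↔ StrictMonoOn V (Set.Ioi 0) ∧ ConcaveOn ℝ (Set.Ioi 0) V := by
  intro V
  constructor
  · exact fun h => ⟨h.1, h.2.1⟩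
  rintro ⟨hmono, hconc⟩
  refine ⟨hmono, hconc, ?_⟩
  intro kbar hkbar kp hkp
  obtain ⟨k₀, hk₀, γ, hγsub, hγρ⟩ := hγ
  obtain ⟨A', hA'def⟩ : ∃ A' : ℝ, A' = |F k₀ 0 - γ * k₀| := ⟨_, rfl⟩
  obtain ⟨β, hβdef⟩ : ∃ β : ℝ, β = max γ 0 := ⟨_, rfl⟩
  have hA' : 0 ≤ A' := hA'def ▸ abs_nonneg _
  have hβ : 0 ≤ β := hβdef ▸ le_max_right γ 0
  have hβρ : β < ρ := hβdef ▸ max_lt hγρ hρ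
  -- linear upper bound for F(·, 0)
  have hFlin : ∀ x : ℝ, 0 ≤ x → F x 0 ≤ β * x + A' := by
    intro x hx
    have h1 : F x 0 - F k₀ 0 ≤ γ * (x - k₀) := hγsub x (Set.mem_Ici.2 hx)
    have h2 : γ * x ≤ β * x :=
      mul_le_mul_of_nonneg_right (hβdef ▸ le_max_left γ 0) hx
    have h3 : F k₀ 0 - γ * k₀ ≤ A' := hA'def ▸ le_abs_self _
    nlinarith
  -- positivity of F(·,0) near 0
  obtain ⟨k', hk'pos, hk'⟩ := hA3.productive 0 le_rfl
  have hFk' : 0 < F k' 0 := by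
    have h0 := hA3.zero
    linarith
  have hFpos : ∀ x : ℝ, 0 < x → x ≤ k' → 0 ≤ F x 0 := by
    intro x hx hxk'
    obtain ⟨t, htdef⟩ : ∃ t : ℝ, t = x / k' := ⟨_, rfl⟩
    have ht0 : 0 < t := htdef ▸ div_pos hx hk'pos
    have ht1 : t ≤ 1 := by
      rw [htdef, div_le_one hk'pos]; exact hxk'
    have htx : t * k' = x := by
      rw [htdef]; field_simp
    have hcc := hA3.concave.2 (show ((k':ℝ), (0:ℝ)) ∈ posOrth from ⟨hk'pos.le, le_rfl⟩)
      (show ((0:ℝ), (0:ℝ)) ∈ posOrth from ⟨le_rfl, le_rfl⟩)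
      ht0.le (by linarith : (0:ℝ) ≤ 1 - t) (by ring)
    have hpt : t • ((k':ℝ), (0:ℝ)) + (1 - t) • ((0:ℝ), (0:ℝ)) = ((x:ℝ), (0:ℝ)) := by
      simp [Prod.ext_iff, htx]
    rw [hpt] at hcc
    simp only [smul_eq_mul] at hcc
    have h0 := hA3.zero
    nlinarith
  -- continuity of the path
  have hlocAC : ∀ a b : ℝ, a ∈ Set.Ici (0:ℝ) → b ∈ Set.Ici (0:ℝ) → a < b → AbsContOn kp a b :=
    hkp.locAC
  have hk0 : kp 0 = kbar := hkp.init
  have hpos : ∀ t ∈ Set.Ici (0:ℝ), 0 < kp t := hkp.pos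
  -- upper bound on the path
  have hup : ∀ T : ℝ, 0 ≤ T → kp T ≤ (kbar + 1 + (A' + 2) * T) * Real.exp (β * T) := by
    refine gronwall_upper hk0 hkbar hβ hA' hlocAC hkp.hasDeriv ?_
    intro t ht
    exact hFlin (kp t) (hpos t ht).le
  -- lower bound on the path
  obtain ⟨m, hmdef⟩ : ∃ m : ℝ, m = min kbar k' := ⟨_, rfl⟩
  have hm : 0 < m := hmdef ▸ lt_min hkbar hk'pos
  have hlo : ∀ T : ℝ, 0 ≤ T → m ≤ kp T := by
    refine stay_above hm (by rw [hk0, hmdef]; exact min_le_left _ _) hlocAC hkp.hasDeriv ?_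
    intro t ht hle
    exact hFpos (kp t) (hpos t ht) (le_trans hle (hmdef ▸ min_le_right kbar k'))
  -- linear upper bound for V
  obtain ⟨C₂, hC₂def⟩ : ∃ C₂ : ℝ, C₂ = |V 2 - V 1| := ⟨_, rfl⟩
  obtain ⟨C₁, hC₁def⟩ : ∃ C₁ : ℝ, C₁ = |V 2| + 2 * |V 2 - V 1| := ⟨_, rfl⟩
  have hC₂ : 0 ≤ C₂ := hC₂def ▸ abs_nonneg _
  have hVle : ∀ x : ℝ, 0 < x → V x ≤ C₁ + C₂ * x := by
    intro x hx
    have h2m : (2:ℝ) ∈ Set.Ioi (0:ℝ) := by norm_num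
    rcases le_or_gt x 2 with hx2 | hx2
    · have h1 : V x ≤ V 2 := hmono.monotoneOn (Set.mem_Ioi.2 hx) h2m hx2
      have h2 : V 2 ≤ |V 2| := le_abs_self _
      have h3 : 0 ≤ C₂ * x := mul_nonneg hC₂ hx.le
      have h4 : 0 ≤ 2 * |V 2 - V 1| := by positivity
      rw [hC₁def]
      linarith
    · have hslope := (hconc.neg).slope_mono_adjacent (show (1:ℝ) ∈ Set.Ioi (0:ℝ) by norm_num)
        (Set.mem_Ioi.2 (by linarith : (0:ℝ) < x)) (by norm_num : (1:ℝ) < 2) hx2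
      simp only [Pi.neg_apply] at hslope
      have h1 : (-V 2 - -V 1) / (2 - 1) = V 1 - V 2 := by ring
      rw [h1] at hslope
      have hx2' : 0 < x - 2 := by linarith
      have h2 : -V x - -V 2 ≥ (V 1 - V 2) * (x - 2) := by
        rw [ge_iff_le, ← le_div_iff₀ hx2']
        exact hslope
      have h3 : V x ≤ V 2 + (V 2 - V 1) * (x - 2) := by nlinarith
      have h4 : (V 2 - V 1) * (x - 2) ≤ |V 2 - V 1| * (x - 2) :=
        mul_le_mul_of_nonneg_right (le_abs_self _) hx2'.le
      have h5 : |V 2 - V 1| * (x - 2) ≤ |V 2 - V 1| * x + 2 * |V 2 - V 1| := by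
        nlinarith [abs_nonneg (V 2 - V 1)]
      have h6 : V 2 ≤ |V 2| := le_abs_self _
      rw [hC₁def, hC₂def]
      linarith
  -- lower bound for V along the path
  have hVlo : ∀ T : ℝ, 0 ≤ T → V (m/2) ≤ V (kp T) := by
    intro T hT
    refine hmono.monotoneOn (Set.mem_Ioi.2 (by linarith)) (Set.mem_Ioi.2 (hpos T hT))
      (by linarith [hlo T hT])
  -- limits
  have hexp0 : Tendsto (fun T : ℝ => Real.exp (-ρ * T)) atTop (𝓝 0) := by
    have h1 : Tendsto (fun T : ℝ => ρ * T) atTop atTop :=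
      Tendsto.const_mul_atTop hρ tendsto_id
    have h2 := Real.tendsto_exp_neg_atTop_nhds_zero.comp h1
    refine h2.congr fun T => ?_
    show Real.exp (-(ρ * T)) = Real.exp (-ρ * T)
    congr 1; ring
  have hc : 0 < ρ - β := by linarith
  have hexp1 : Tendsto (fun T : ℝ => Real.exp ((β - ρ) * T)) atTop (𝓝 0) := by
    have h1 : Tendsto (fun T : ℝ => (ρ - β) * T) atTop atTop :=
      Tendsto.const_mul_atTop hc tendsto_id
    have h2 := Real.tendsto_exp_neg_atTop_nhds_zero.comp h1
    refine h2.congr fun T => ?_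
    show Real.exp (-((ρ - β) * T)) = Real.exp ((β - ρ) * T)
    congr 1; ring
  have hexp2 : Tendsto (fun T : ℝ => T * Real.exp ((β - ρ) * T)) atTop (𝓝 0) := by
    have h1 : Tendsto (fun T : ℝ => (ρ - β) * T) atTop atTop :=
      Tendsto.const_mul_atTop hc tendsto_id
    have h2 := (Real.tendsto_pow_mul_exp_neg_atTop_nhds_zero 1).comp h1
    have h3 := h2.const_mul (1 / (ρ - β))
    rw [mul_zero] at h3
    refine h3.congr fun T => ?_
    show (1/(ρ-β)) * (((ρ-β)*T)^1 * Real.exp (-((ρ-β)*T))) = T * Real.exp ((β-ρ)*T)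
    rw [show -((ρ - β) * T) = (β - ρ) * T by ring, pow_one]
    field_simp
  have hexpmul : ∀ T : ℝ, Real.exp (-ρ * T) * Real.exp (β * T) = Real.exp ((β - ρ) * T) := by
    intro T
    rw [← Real.exp_add]
    congr 1
    ring
  -- squeeze
  have hglim : Tendsto (fun T : ℝ => Real.exp (-ρ * T) * V (m/2)) atTop (𝓝 0) := by
    have := hexp0.mul_const (V (m/2))
    simpa using this
  have hhlim : Tendsto (fun T : ℝ =>
      Real.exp (-ρ * T) * (C₁ + C₂ * ((kbar + 1 + (A' + 2) * T) * Real.exp (β * T))))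
      atTop (𝓝 0) := by
    have hsum : Tendsto (fun T : ℝ =>
        C₁ * Real.exp (-ρ * T) + C₂ * (kbar + 1) * Real.exp ((β - ρ) * T)
          + C₂ * (A' + 2) * (T * Real.exp ((β - ρ) * T))) atTop (𝓝 (C₁ * 0 + C₂ * (kbar + 1) * 0 + C₂ * (A' + 2) * 0)) :=
      ((hexp0.const_mul C₁).add (hexp1.const_mul (C₂ * (kbar + 1)))).add
        (hexp2.const_mul (C₂ * (A' + 2)))
    rw [show C₁ * 0 + C₂ * (kbar + 1) * 0 + C₂ * (A' + 2) * 0 = 0 by ring] at hsum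
    refine hsum.congr fun T => ?_
    have h := hexpmul T
    linear_combination (-(C₂ * (kbar + 1)) - C₂ * (A' + 2) * T) * h
  refine tendsto_of_tendsto_of_tendsto_of_le_of_le' hglim hhlim ?_ ?_
  · filter_upwards [eventually_ge_atTop (0:ℝ)] with T hT
    exact mul_le_mul_of_nonneg_left (hVlo T hT) (Real.exp_pos _).le
  · filter_upwards [eventually_ge_atTop (0:ℝ)] with T hT
    refine mul_le_mul_of_nonneg_left ?_ (Real.exp_pos _).le
    have h1 : V (kp T) ≤ C₁ + C₂ * kp T := hVle (kp T) (hpos T hT)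
    have h2 : C₂ * kp T ≤ C₂ * ((kbar + 1 + (A' + 2) * T) * Real.exp (β * T)) :=
      mul_le_mul_of_nonneg_left (hup T hT) hC₂
    linarith


end
end

section
/- Suppose Assumptions 1-4 hold. Then there exists a positive continuous function c*(p,k) defined on ℝ₊₊² such that for all (p,k) ∈ ℝ₊₊², F(k,c*(p,k))·p + u(c*(p,k),k) = sup_{c≥0}{F(k,c)·p + u(c,k)}. -/
open MeasureTheory Real Set Filter Topology
open scoped ENNReal NNReal

noncomputable section

/- ## Auxiliary material for Proposition 1 -/

section AuxProp1

variable {u : ℝ → ℝ → EReal} {W : Set (ℝ → ℝ)} {F : ℝ → ℝ → ℝ}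

private lemma isOpen_posOrthOpen : IsOpen posOrthOpen :=
  (isOpen_lt continuous_const continuous_fst).inter (isOpen_lt continuous_const continuous_snd)

private lemma u_eq_ur (hA2 : Assumption2 u) {c k : ℝ} (hc : 0 < c) (hk : 0 < k) :
    u c k = ((ur u c k : ℝ) : EReal) :=
  (EReal.coe_toReal (hA2.ne_top c k) (hA2.ne_bot_pos c k hc hk)).symm

private lemma ur_contOn (hA2 : Assumption2 u) :
    ContinuousOn (fun q : ℝ × ℝ => ur u q.1 q.2) posOrthOpen :=
  hA2.smooth.continuousOn

private lemma ur_contOn_c (hA2 : Assumption2 u) {k : ℝ} (hk : 0 < k) :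
    ContinuousOn (fun c => ur u c k) (Set.Ioi 0) := by
  have h : ContinuousOn ((fun q : ℝ × ℝ => ur u q.1 q.2) ∘ fun c : ℝ => (c, k))
      (Set.Ioi 0) :=
    (ur_contOn hA2).comp (continuous_id.prodMk continuous_const).continuousOn
      (fun c hc => ⟨hc, hk⟩)
  exact h

private lemma ur_contOn_k (hA2 : Assumption2 u) {c : ℝ} (hc : 0 < c) :
    ContinuousOn (fun k => ur u c k) (Set.Ioi 0) := by
  have h : ContinuousOn ((fun q : ℝ × ℝ => ur u q.1 q.2) ∘ fun k : ℝ => (c, k))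
      (Set.Ioi 0) :=
    (ur_contOn hA2).comp (continuous_const.prodMk continuous_id).continuousOn
      (fun k hk => ⟨hc, hk⟩)
  exact h

private lemma ur_hasDerivAt (hA2 : Assumption2 u) {c k : ℝ} (hc : 0 < c) (hk : 0 < k) :
    HasDerivAt (fun c' => ur u c' k) (ucDeriv u c k) c := by
  have hd : DifferentiableAt ℝ (fun q : ℝ × ℝ => ur u q.1 q.2) (c, k) :=
    (hA2.smooth.differentiableOn one_ne_zero).differentiableAt
      (isOpen_posOrthOpen.mem_nhds ⟨hc, hk⟩)
  have h : DifferentiableAt ℝ ((fun q : ℝ × ℝ => ur u q.1 q.2) ∘ fun c' : ℝ => (c', k)) c :=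
    hd.comp c (differentiableAt_id.prodMk (differentiableAt_const k))
  exact (h : DifferentiableAt ℝ (fun c' : ℝ => ur u c' k) c).hasDerivAt

private lemma ur_slope_bounds (hA2 : Assumption2 u) (hA4 : Assumption4 u) {k a b : ℝ}
    (hk : 0 < k) (ha : 0 < a) (hab : a < b) :
    ucDeriv u b k * (b - a) ≤ ur u b k - ur u a k ∧
      ur u b k - ur u a k ≤ ucDeriv u a k * (b - a) := by
  obtain ⟨ξ, hξ, hslope⟩ := exists_hasDerivAt_eq_slope (fun c => ur u c k)
    (fun c => ucDeriv u c k) hab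
    ((ur_contOn_c hA2 hk).mono (fun x hx => lt_of_lt_of_le ha hx.1))
    (fun x hx => ur_hasDerivAt hA2 (ha.trans hx.1) hk)
  have hba : (0:ℝ) < b - a := sub_pos.2 hab
  rw [eq_div_iff hba.ne'] at hslope
  have h1 : ucDeriv u b k < ucDeriv u ξ k := hA4.anti k ξ b hk (ha.trans hξ.1) hξ.2
  have h2 : ucDeriv u ξ k < ucDeriv u a k := hA4.anti k a ξ hk ha hξ.1
  constructor
  · nlinarith
  · nlinarith

private lemma F_cont_k (hA3 : Assumption3 W F) {c : ℝ} (hc : 0 ≤ c) :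
    ContinuousOn (fun k => F k c) (Set.Ici 0) := by
  have h : ContinuousOn ((fun q : ℝ × ℝ => F q.1 q.2) ∘ fun k : ℝ => (k, c)) (Set.Ici 0) :=
    hA3.cont.comp (continuous_id.prodMk continuous_const).continuousOn
      (fun k hk => ⟨hk, hc⟩)
  exact h

private lemma F_cont_c (hA3 : Assumption3 W F) {k : ℝ} (hk : 0 ≤ k) :
    ContinuousOn (fun c => F k c) (Set.Ici 0) := by
  have h : ContinuousOn ((fun q : ℝ × ℝ => F q.1 q.2) ∘ fun c : ℝ => (k, c)) (Set.Ici 0) :=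
    hA3.cont.comp (continuous_const.prodMk continuous_id).continuousOn
      (fun c hc => ⟨hk, hc⟩)
  exact h

private lemma F_concaveOn_c (hA3 : Assumption3 W F) {k : ℝ} (hk : 0 ≤ k) :
    ConcaveOn ℝ (Set.Ici 0) (fun c => F k c) := by
  refine ⟨convex_Ici 0, ?_⟩
  intro c₁ hc₁ c₂ hc₂ a b ha hb hab
  have h := hA3.concave.2 (x := (k, c₁)) ⟨hk, hc₁⟩ (y := (k, c₂)) ⟨hk, hc₂⟩ ha hb hab
  have hkk : a * k + b * k = k := by nlinarith
  simpa [Prod.smul_mk, Prod.mk_add_mk, smul_eq_mul, hkk] using h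

private lemma G_contOn_c (hA2 : Assumption2 u) (hA3 : Assumption3 W F) {p k : ℝ}
    (hk : 0 < k) : ContinuousOn (fun c => F k c * p + ur u c k) (Set.Ioi 0) :=
  (((F_cont_c hA3 hk.le).mono Set.Ioi_subset_Ici_self).mul continuousOn_const).add
    (ur_contOn_c hA2 hk)

private lemma G_contOn (hA2 : Assumption2 u) (hA3 : Assumption3 W F) :
    ContinuousOn (fun q : (ℝ × ℝ) × ℝ => F q.1.2 q.2 * q.1.1 + ur u q.2 q.1.2)
      {q : (ℝ × ℝ) × ℝ | 0 < q.1.1 ∧ 0 < q.1.2 ∧ 0 < q.2} := by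
  apply ContinuousOn.add
  · apply ContinuousOn.mul
    · exact hA3.cont.comp
        (((continuous_snd.comp continuous_fst).prodMk continuous_snd)).continuousOn
        (fun q hq => ⟨hq.2.1.le, hq.2.2.le⟩)
    · exact (continuous_fst.comp continuous_fst).continuousOn
  · exact (ur_contOn hA2).comp
      ((continuous_snd.prodMk (continuous_snd.comp continuous_fst))).continuousOn
      (fun q hq => ⟨hq.2.2, hq.2.1⟩)

private lemma G_strictConcave (hA2 : Assumption2 u) (hA3 : Assumption3 W F)
    (hA4 : Assumption4 u) {p k : ℝ} (hp : 0 < p) (hk : 0 < k) :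
    StrictConcaveOn ℝ (Set.Ioi 0) (fun c => F k c * p + ur u c k) := by
  have h1 : ConcaveOn ℝ (Set.Ioi 0) (fun c => F k c * p) := by
    have h := (((F_concaveOn_c hA3 hk.le).subset Set.Ioi_subset_Ici_self
      (convex_Ioi 0)).smul hp.le)
    have h' : ConcaveOn ℝ (Set.Ioi 0) fun c => F k c * p := by
      simpa [smul_eq_mul, mul_comm] using h
    exact h'
  have h2 : StrictConcaveOn ℝ (Set.Ioi 0) (fun c => ur u c k) := by
    apply StrictAntiOn.strictConcaveOn_of_deriv (convex_Ioi 0) (ur_contOn_c hA2 hk)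
    rw [interior_Ioi]
    intro a ha b hb hab
    exact hA4.anti k a b hk ha hab
  exact h1.add_strictConcaveOn h2

set_option maxHeartbeats 1000000 in
private lemma local_bounds (hA2 : Assumption2 u) (hA3 : Assumption3 W F)
    (hA4 : Assumption4 u) {p₀ k₀ : ℝ} (hp₀ : 0 < p₀) (hk₀ : 0 < k₀) :
    ∃ c₁ c₂ : ℝ, 0 < c₁ ∧ c₁ < c₂ ∧ ∃ U : Set (ℝ × ℝ), IsOpen U ∧ (p₀, k₀) ∈ U ∧
      U ⊆ posOrthOpen ∧ ∀ p k : ℝ, (p, k) ∈ U →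
        (∀ c : ℝ, 0 < c → c < c₁ → F k c * p + ur u c k < F k c₁ * p + ur u c₁ k) ∧
        (∀ c : ℝ, c₂ < c → F k c * p + ur u c k < F k c₂ * p + ur u c₂ k) := by
  classical
  set K : Set ℝ := Set.Icc (k₀ / 2) (2 * k₀) with hK
  have hk₀K : k₀ ∈ K := ⟨by linarith, by linarith⟩
  have hKsub : K ⊆ Set.Ici (0:ℝ) := fun k hk => le_trans (by linarith) hk.1
  have hKpos : ∀ k ∈ K, (0:ℝ) < k := fun k hk => lt_of_lt_of_le (by linarith) hk.1
  -- the constant M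
  have hcM : ContinuousOn (fun k => F k 0 - F k 2) K :=
    ((F_cont_k hA3 le_rfl).mono hKsub).sub
      ((F_cont_k hA3 (by norm_num : (0:ℝ) ≤ 2)).mono hKsub)
  obtain ⟨kM, hkM, hMmax⟩ := isCompact_Icc.exists_isMaxOn ⟨k₀, hk₀K⟩ hcM
  set M : ℝ := F kM 0 - F kM 2 with hMdef
  have hMpos : 0 < M := sub_pos.2 (hA3.anti_c kM 0 2 (hKpos kM hkM).le le_rfl two_pos)
  have hMk : ∀ k ∈ K, F k 0 - F k 2 ≤ M := fun k hk => hMmax hk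
  -- the constant m
  have hcm : ContinuousOn (fun k => F k 1 - F k 2) K :=
    ((F_cont_k hA3 (by norm_num : (0:ℝ) ≤ 1)).mono hKsub).sub
      ((F_cont_k hA3 (by norm_num : (0:ℝ) ≤ 2)).mono hKsub)
  obtain ⟨km, hkm, hmmin⟩ := isCompact_Icc.exists_isMinOn ⟨k₀, hk₀K⟩ hcm
  set m : ℝ := F km 1 - F km 2 with hmdef
  have hmpos : 0 < m := sub_pos.2 (hA3.anti_c km 1 2 (hKpos km hkm).le one_pos.le one_lt_two)
  have hmk : ∀ k ∈ K, m ≤ F k 1 - F k 2 := fun k hk => hmmin hk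
  -- choose x and c₁
  have hx2 : ∀ᶠ c in 𝓝[>] (0:ℝ), c ∈ Set.Ioo (0:ℝ) 2 :=
    Filter.eventually_of_mem (Ioo_mem_nhdsGT_of_mem ⟨le_rfl, two_pos⟩) (fun _ h => h)
  obtain ⟨x, hx1, hx0, hxlt2⟩ :=
    (((hA4.tendsto_zero k₀ hk₀).eventually_gt_atTop (M * (2 * p₀) + 1)).and hx2).exists
  set c₁ : ℝ := x / 2 with hc₁def
  have hc₁pos : 0 < c₁ := by simp [hc₁def]; linarith
  have hc₁lt1 : c₁ < 1 := by simp [hc₁def]; linarith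
  have hc₁x : c₁ < x := by simp [hc₁def]; linarith
  set s : ℝ → ℝ := fun k => (ur u x k - ur u c₁ k) / (x - c₁) with hsdef
  have hscont : ContinuousOn s (Set.Ioi 0) :=
    ((ur_contOn_k hA2 hx0).sub (ur_contOn_k hA2 hc₁pos)).div_const _
  have hsk₀ : M * (2 * p₀) < s k₀ := by
    have h := (ur_slope_bounds hA2 hA4 hk₀ hc₁pos hc₁x).1
    have hxc : (0:ℝ) < x - c₁ := sub_pos.2 hc₁x
    have h2 : M * (2 * p₀) < ucDeriv u x k₀ := by linarith
    show M * (2 * p₀) < (ur u x k₀ - ur u c₁ k₀) / (x - c₁)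
    rw [lt_div_iff₀ hxc]
    nlinarith [mul_lt_mul_of_pos_right h2 hxc]
  set V₁ : Set ℝ := Set.Ioi 0 ∩ s ⁻¹' Set.Ioi (M * (2 * p₀)) with hV₁def
  have hV₁open : IsOpen V₁ := hscont.isOpen_inter_preimage isOpen_Ioi isOpen_Ioi
  have hk₀V₁ : k₀ ∈ V₁ := ⟨hk₀, hsk₀⟩
  -- choose y and c₂
  obtain ⟨y, hy1, hy2⟩ :=
    (((hA4.tendsto_top k₀ hk₀).eventually_lt_const
      (show (0:ℝ) < m * (p₀ / 2) / 4 by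
        have := mul_pos hmpos (half_pos hp₀); linarith)).and
      (Filter.eventually_gt_atTop 2)).exists
  set c₂ : ℝ := 2 * y with hc₂def
  have hyc₂ : y < c₂ := by simp [hc₂def]; linarith
  have hc₂gt2 : 2 < c₂ := by simp [hc₂def]; linarith
  set s₂ : ℝ → ℝ := fun k => (ur u c₂ k - ur u y k) / (c₂ - y) with hs₂def
  have hs₂cont : ContinuousOn s₂ (Set.Ioi 0) :=
    ((ur_contOn_k hA2 (by linarith : (0:ℝ) < c₂)).sub
      (ur_contOn_k hA2 (by linarith : (0:ℝ) < y))).div_const _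
  have hs₂k₀ : s₂ k₀ < m * (p₀ / 2) / 2 := by
    have h := (ur_slope_bounds hA2 hA4 hk₀ (by linarith : (0:ℝ) < y) hyc₂).2
    have hyc : (0:ℝ) < c₂ - y := sub_pos.2 hyc₂
    have h2 : ucDeriv u y k₀ < m * (p₀ / 2) / 2 := by
      have hmp : 0 < m * (p₀ / 2) := mul_pos hmpos (half_pos hp₀)
      linarith
    show (ur u c₂ k₀ - ur u y k₀) / (c₂ - y) < m * (p₀ / 2) / 2
    rw [div_lt_iff₀ hyc]
    nlinarith [mul_lt_mul_of_pos_right h2 hyc]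
  set V₂ : Set ℝ := Set.Ioi 0 ∩ s₂ ⁻¹' Set.Iio (m * (p₀ / 2) / 2) with hV₂def
  have hV₂open : IsOpen V₂ := hs₂cont.isOpen_inter_preimage isOpen_Ioi isOpen_Iio
  have hk₀V₂ : k₀ ∈ V₂ := ⟨hk₀, hs₂k₀⟩
  -- the neighbourhood U
  refine ⟨c₁, c₂, hc₁pos, by linarith, Set.Ioo (p₀ / 2) (2 * p₀) ×ˢ
    (Set.Ioo (k₀ / 2) (2 * k₀) ∩ (V₁ ∩ V₂)), ?_, ?_, ?_, ?_⟩
  · exact isOpen_Ioo.prod (isOpen_Ioo.inter (hV₁open.inter hV₂open))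
  · exact ⟨⟨by linarith, by linarith⟩, ⟨by linarith, by linarith⟩, hk₀V₁, hk₀V₂⟩
  · rintro ⟨p, k⟩ ⟨hp, hk, -⟩
    exact ⟨by simpa using lt_trans (by linarith) hp.1, by simpa using lt_trans (by linarith) hk.1⟩
  · rintro p k ⟨hp, hkmem, hkV₁, hkV₂⟩
    have hskV : M * (2 * p₀) < (ur u x k - ur u c₁ k) / (x - c₁) := hkV₁.2
    have hs₂kV : (ur u c₂ k - ur u y k) / (c₂ - y) < m * (p₀ / 2) / 2 := hkV₂.2
    clear_value V₂ V₁ s₂ s c₂ c₁ m M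
    have hkK : k ∈ K := ⟨hkmem.1.le, hkmem.2.le⟩
    have hkpos : (0:ℝ) < k := hKpos k hkK
    have hppos : (0:ℝ) < p := lt_trans (by linarith) hp.1
    have hFconc := F_concaveOn_c hA3 hkpos.le
    constructor
    · -- near zero
      intro c hc hcc₁
      have hcd : (0:ℝ) < c₁ - c := sub_pos.2 hcc₁
      -- F slope lower bound
      have hsl1 : (F k 2 - F k c₁) / (2 - c₁) ≤ (F k c₁ - F k c) / (c₁ - c) :=
        hFconc.slope_anti_adjacent hc.le (by norm_num) hcc₁ (by linarith)
      have hF20 : F k 2 - F k c₁ ≥ -M := by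
        have h1 : F k c₁ < F k 0 := hA3.anti_c k 0 c₁ hkpos.le le_rfl hc₁pos
        have h2 := hMk k hkK
        linarith
      have hF2neg : F k 2 - F k c₁ ≤ 0 := by
        have := hA3.anti_c k c₁ 2 hkpos.le hc₁pos.le (by linarith)
        linarith
      have hden : (1:ℝ) ≤ 2 - c₁ := by linarith
      have hstep : -M ≤ (F k 2 - F k c₁) / (2 - c₁) := by
        rw [le_div_iff₀ (by linarith : (0:ℝ) < 2 - c₁)]
        nlinarith
      have hF1 : -M * (c₁ - c) ≤ F k c₁ - F k c := by
        have := le_trans hstep hsl1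
        rwa [le_div_iff₀ hcd] at this
      -- utility slope lower bound
      have hU1 : ucDeriv u c₁ k * (c₁ - c) ≤ ur u c₁ k - ur u c k :=
        (ur_slope_bounds hA2 hA4 hkpos hc hcc₁).1
      have hU2 : ur u x k - ur u c₁ k ≤ ucDeriv u c₁ k * (x - c₁) :=
        (ur_slope_bounds hA2 hA4 hkpos hc₁pos hc₁x).2
      have hskd : (ur u x k - ur u c₁ k) / (x - c₁) ≤ ucDeriv u c₁ k := by
        rw [div_le_iff₀ (sub_pos.2 hc₁x)]
        exact hU2
      have hud : M * (2 * p₀) < ucDeriv u c₁ k := lt_of_lt_of_le hskV hskd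
      have hple : p < 2 * p₀ := hp.2
      have e1 : -M * (c₁ - c) * p ≤ (F k c₁ - F k c) * p :=
        mul_le_mul_of_nonneg_right hF1 hppos.le
      have e2 : M * (2 * p₀) * (c₁ - c) < ucDeriv u c₁ k * (c₁ - c) :=
        mul_lt_mul_of_pos_right hud hcd
      have e3 : M * (c₁ - c) * p ≤ M * (c₁ - c) * (2 * p₀) :=
        mul_le_mul_of_nonneg_left hple.le (mul_pos hMpos hcd).le
      nlinarith [e1, e2, e3, hU1]
    · -- tail
      intro c hc
      have hcd : (0:ℝ) < c - c₂ := sub_pos.2 hc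
      have hcpos : (0:ℝ) < c := by linarith
      -- F slope upper bound
      have hs1 : (F k c - F k c₂) / (c - c₂) ≤ (F k c₂ - F k 1) / (c₂ - 1) :=
        hFconc.slope_anti_adjacent (by norm_num) hcpos.le (by linarith) hc
      have hs2 : (F k c₂ - F k 2) / (c₂ - 2) ≤ (F k 2 - F k 1) / (2 - 1) :=
        hFconc.slope_anti_adjacent (by norm_num) (Set.mem_Ici.2 (by linarith))
          one_lt_two hc₂gt2
      have hs2' : F k c₂ - F k 2 ≤ (F k 2 - F k 1) * (c₂ - 2) := by
        norm_num at hs2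
        rw [div_le_iff₀ (by linarith : (0:ℝ) < c₂ - 2)] at hs2
        linarith
      have hmF : F k 2 - F k 1 ≤ -m := by
        have := hmk k hkK
        linarith
      have hs3 : (F k c₂ - F k 1) / (c₂ - 1) ≤ -m := by
        rw [div_le_iff₀ (by linarith : (0:ℝ) < c₂ - 1)]
        nlinarith
      have hF1 : F k c - F k c₂ ≤ -m * (c - c₂) := by
        have := le_trans hs1 hs3
        rwa [div_le_iff₀ hcd] at this
      -- utility slope upper bound
      have hU1 : ur u c k - ur u c₂ k ≤ ucDeriv u c₂ k * (c - c₂) :=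
        (ur_slope_bounds hA2 hA4 hkpos (by linarith : (0:ℝ) < c₂) hc).2
      have hU2 : ucDeriv u c₂ k * (c₂ - y) ≤ ur u c₂ k - ur u y k :=
        (ur_slope_bounds hA2 hA4 hkpos (by linarith : (0:ℝ) < y) hyc₂).1
      have hskd : ucDeriv u c₂ k ≤ (ur u c₂ k - ur u y k) / (c₂ - y) := by
        rw [le_div_iff₀ (sub_pos.2 hyc₂)]
        exact hU2
      have hud : ucDeriv u c₂ k < m * (p₀ / 2) / 2 := lt_of_le_of_lt hskd hs₂kV
      have hpge : p₀ / 2 < p := hp.1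
      have e1 : (F k c - F k c₂) * p ≤ -m * (c - c₂) * p :=
        mul_le_mul_of_nonneg_right hF1 hppos.le
      have e2 : ucDeriv u c₂ k * (c - c₂) < m * (p₀ / 2) / 2 * (c - c₂) :=
        mul_lt_mul_of_pos_right hud hcd
      have e3 : m * (c - c₂) * (p₀ / 2) ≤ m * (c - c₂) * p :=
        mul_le_mul_of_nonneg_left hpge.le (mul_pos hmpos hcd).le
      have e4 : 0 < m * p₀ * (c - c₂) := mul_pos (mul_pos hmpos hp₀) hcd
      nlinarith [e1, e2, e3, e4, hU1]

private lemma exists_argmax (hA2 : Assumption2 u) (hA3 : Assumption3 W F)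
    (hA4 : Assumption4 u) {p k : ℝ} (hp : 0 < p) (hk : 0 < k) :
    ∃ c : ℝ, 0 < c ∧ ∀ c' : ℝ, 0 < c' →
      F k c' * p + ur u c' k ≤ F k c * p + ur u c k := by
  obtain ⟨c₁, c₂, hc₁, hc₁₂, U, hUopen, hUmem, hUsub, hU⟩ := local_bounds hA2 hA3 hA4 hp hk
  obtain ⟨hlow, hhigh⟩ := hU p k hUmem
  have hGc : ContinuousOn (fun c => F k c * p + ur u c k) (Set.Icc c₁ c₂) :=
    (G_contOn_c hA2 hA3 hk).mono (fun c hcc => lt_of_lt_of_le hc₁ hcc.1)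
  obtain ⟨cm, hcm, hmax⟩ := isCompact_Icc.exists_isMaxOn ⟨c₁, Set.left_mem_Icc.2 hc₁₂.le⟩ hGc
  refine ⟨cm, lt_of_lt_of_le hc₁ hcm.1, ?_⟩
  intro c' hc'
  rcases lt_or_ge c' c₁ with h | h
  · exact le_trans (hlow c' hc' h).le (hmax (Set.left_mem_Icc.2 hc₁₂.le))
  rcases le_or_gt c' c₂ with h2 | h2
  · exact hmax ⟨h, h2⟩
  · exact le_trans (hhigh c' h2).le (hmax (Set.right_mem_Icc.2 hc₁₂.le))

private lemma argmax_unique (hA2 : Assumption2 u) (hA3 : Assumption3 W F)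
    (hA4 : Assumption4 u) {p k a b : ℝ} (hp : 0 < p) (hk : 0 < k)
    (ha : 0 < a ∧ ∀ c' : ℝ, 0 < c' → F k c' * p + ur u c' k ≤ F k a * p + ur u a k)
    (hb : 0 < b ∧ ∀ c' : ℝ, 0 < c' → F k c' * p + ur u c' k ≤ F k b * p + ur u b k) :
    a = b := by
  by_contra hne
  have hG := G_strictConcave hA2 hA3 hA4 hp hk
  have h1 : F k a * p + ur u a k = F k b * p + ur u b k :=
    le_antisymm (hb.2 a ha.1) (ha.2 b hb.1)
  have h2 := hG.2 (Set.mem_Ioi.2 ha.1) (Set.mem_Ioi.2 hb.1) hne one_half_pos one_half_pos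
    (by norm_num)
  simp only [smul_eq_mul] at h2
  have hmid : (0:ℝ) < (1:ℝ)/2 * a + (1:ℝ)/2 * b := by
    have := ha.1; have := hb.1; linarith
  have h3 := ha.2 _ hmid
  rw [h1] at h2
  have : F k ((1:ℝ)/2 * a + (1:ℝ)/2 * b) * p + ur u ((1:ℝ)/2 * a + (1:ℝ)/2 * b) k >
      F k a * p + ur u a k := by rw [h1]; linarith
  linarith

end AuxProp1

/-- **Proposition 1.** Under Assumptions 1–4 there exists a positive continuous maximizer
function `c*(p,k)` on `ℝ₊₊²` for the Hamiltonian. -/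
theorem exists_max_selection (ρ : ℝ) (W : Set (ℝ → ℝ)) (u : ℝ → ℝ → EReal) (F : ℝ → ℝ → ℝ)
    (hA1 : Assumption1 ρ W) (hA2 : Assumption2 u) (hA3 : Assumption3 W F)
    (hA4 : Assumption4 u) :
    ∃ cs : ℝ → ℝ → ℝ, IsMaxSelection u F cs := by
  classical
  have hex : ∀ p k : ℝ, 0 < p → 0 < k →
      ∃ c : ℝ, 0 < c ∧ ∀ c' : ℝ, 0 < c' →
        F k c' * p + ur u c' k ≤ F k c * p + ur u c k :=
    fun p k hp hk => exists_argmax hA2 hA3 hA4 hp hk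
  set cs : ℝ → ℝ → ℝ := fun p k =>
    if h : ∃ c : ℝ, 0 < c ∧ ∀ c' : ℝ, 0 < c' →
        F k c' * p + ur u c' k ≤ F k c * p + ur u c k then h.choose else 1 with hcs
  have hcsP : ∀ p k : ℝ, 0 < p → 0 < k → 0 < cs p k ∧ ∀ c' : ℝ, 0 < c' →
      F k c' * p + ur u c' k ≤ F k (cs p k) * p + ur u (cs p k) k := by
    intro p k hp hk
    have h := hex p k hp hk
    simp only [hcs, dif_pos h]
    exact h.choose_spec
  have huniq : ∀ p k c : ℝ, 0 < p → 0 < k →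
      (0 < c ∧ ∀ c' : ℝ, 0 < c' → F k c' * p + ur u c' k ≤ F k c * p + ur u c k) →
      c = cs p k := fun p k c hp hk hc =>
    argmax_unique hA2 hA3 hA4 hp hk hc (hcsP p k hp hk)
  refine ⟨cs, fun p k hp hk => (hcsP p k hp hk).1, ?_, ?_⟩
  · -- continuity
    apply continuousOn_of_forall_continuousAt
    rintro ⟨p₀, k₀⟩ ⟨hp₀, hk₀⟩
    obtain ⟨c₁, c₂, hc₁, hc₁₂, U, hUopen, hUmem, hUsub, hU⟩ :=
      local_bounds hA2 hA3 hA4 hp₀ hk₀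
    have hc₂pos : (0:ℝ) < c₂ := hc₁.trans hc₁₂
    have hmem : ∀ p k : ℝ, (p, k) ∈ U → cs p k ∈ Set.Icc c₁ c₂ := by
      intro p k hpk
      have hp := (hUsub hpk).1
      have hk := (hUsub hpk).2
      obtain ⟨hpos, hmax⟩ := hcsP p k hp hk
      constructor
      · by_contra hlt
        push_neg at hlt
        exact absurd (hmax c₁ hc₁) (not_le.2 ((hU p k hpk).1 _ hpos hlt))
      · by_contra hlt
        push_neg at hlt
        exact absurd (hmax c₂ hc₂pos) (not_le.2 ((hU p k hpk).2 _ hlt))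
    rw [Metric.continuousAt_iff]
    intro ε hε
    have hcq : cs p₀ k₀ ∈ Set.Icc c₁ c₂ := hmem p₀ k₀ hUmem
    obtain ⟨hc₀pos, hmax₀⟩ := hcsP p₀ k₀ hp₀ hk₀
    set D : Set ℝ := Set.Icc c₁ c₂ ∩
      (Set.Iic (cs p₀ k₀ - ε) ∪ Set.Ici (cs p₀ k₀ + ε)) with hD
    have hDcpt : IsCompact D := isCompact_Icc.inter_right (isClosed_Iic.union isClosed_Ici)
    have hDsub : D ⊆ Set.Icc c₁ c₂ := Set.inter_subset_left
    obtain ⟨η, hη, hgap⟩ : ∃ η > (0:ℝ), ∀ c ∈ D,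
        F k₀ c * p₀ + ur u c k₀ ≤ F k₀ (cs p₀ k₀) * p₀ + ur u (cs p₀ k₀) k₀ - η := by
      rcases Set.eq_empty_or_nonempty D with hDe | hDne
      · exact ⟨1, one_pos, fun c hc => by rw [hDe] at hc; exact absurd hc (Set.notMem_empty c)⟩
      · obtain ⟨cb, hcb, hmaxD⟩ := hDcpt.exists_isMaxOn hDne
          ((G_contOn_c hA2 hA3 (p := p₀) hk₀).mono (fun c hcc => lt_of_lt_of_le hc₁ (hDsub hcc).1))
        have hcbpos : 0 < cb := lt_of_lt_of_le hc₁ (hDsub hcb).1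
        have hlt : F k₀ cb * p₀ + ur u cb k₀ < F k₀ (cs p₀ k₀) * p₀ + ur u (cs p₀ k₀) k₀ := by
          rcases (hmax₀ cb hcbpos).lt_or_eq with h | h
          · exact h
          · exfalso
            have hPcb : 0 < cb ∧ ∀ c' : ℝ, 0 < c' →
                F k₀ c' * p₀ + ur u c' k₀ ≤ F k₀ cb * p₀ + ur u cb k₀ :=
              ⟨hcbpos, fun c' hc' => (hmax₀ c' hc').trans_eq h.symm⟩
            have hcb0 := huniq p₀ k₀ cb hp₀ hk₀ hPcb
            rcases hcb.2 with h' | h'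
            · rw [hcb0] at h'; simp only [Set.mem_Iic] at h'; linarith
            · rw [hcb0] at h'; simp only [Set.mem_Ici] at h'; linarith
        refine ⟨F k₀ (cs p₀ k₀) * p₀ + ur u (cs p₀ k₀) k₀ -
          (F k₀ cb * p₀ + ur u cb k₀), by linarith, ?_⟩
        intro c hc
        have h := hmaxD hc
        simp only [Set.mem_setOf_eq] at h
        linarith
    obtain ⟨r, hr, hball⟩ := Metric.isOpen_iff.1 hUopen (p₀, k₀) hUmem
    set S : Set ((ℝ × ℝ) × ℝ) :=
      Metric.closedBall ((p₀, k₀) : ℝ × ℝ) (r / 2) ×ˢ Set.Icc c₁ c₂ with hS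
    have hSsub : S ⊆ {q : (ℝ × ℝ) × ℝ | 0 < q.1.1 ∧ 0 < q.1.2 ∧ 0 < q.2} := by
      rintro ⟨⟨p, k⟩, c⟩ ⟨hq, hc⟩
      have hqU : (p, k) ∈ U := hball
        (Metric.mem_ball.2 (lt_of_le_of_lt (Metric.mem_closedBall.1 hq) (by linarith)))
      exact ⟨(hUsub hqU).1, (hUsub hqU).2, lt_of_lt_of_le hc₁ hc.1⟩
    have hScpt : IsCompact S := (isCompact_closedBall _ _).prod isCompact_Icc
    have hUC := hScpt.uniformContinuousOn_of_continuous ((G_contOn hA2 hA3).mono hSsub)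
    rw [Metric.uniformContinuousOn_iff] at hUC
    obtain ⟨δ₀, hδ₀, hUCd⟩ := hUC (η / 2) (by linarith)
    refine ⟨min δ₀ (r / 2), by positivity, ?_⟩
    intro q hq
    obtain ⟨p, k⟩ := q
    show dist (cs p k) (cs p₀ k₀) < ε
    have hqU : (p, k) ∈ U := hball
      (Metric.mem_ball.2 (lt_of_lt_of_le hq ((min_le_right _ _).trans (by linarith))))
    have hp : 0 < p := (hUsub hqU).1
    have hk : 0 < k := (hUsub hqU).2
    have hqcb : (p, k) ∈ Metric.closedBall ((p₀, k₀) : ℝ × ℝ) (r / 2) :=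
      Metric.mem_closedBall.2 (le_of_lt (lt_of_lt_of_le hq (min_le_right _ _)))
    have hccb : ((p₀, k₀) : ℝ × ℝ) ∈ Metric.closedBall ((p₀, k₀) : ℝ × ℝ) (r / 2) :=
      Metric.mem_closedBall_self (by linarith)
    have hcsmem : cs p k ∈ Set.Icc c₁ c₂ := hmem p k hqU
    have hdq : dist ((p, k) : ℝ × ℝ) ((p₀, k₀) : ℝ × ℝ) < δ₀ :=
      lt_of_lt_of_le hq (min_le_left _ _)
    have hnotD : cs p k ∉ D := by
      intro hmemD
      have h1 : (((p, k), cs p k) : (ℝ × ℝ) × ℝ) ∈ S := ⟨hqcb, hcsmem⟩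
      have h2 : ((((p₀, k₀) : ℝ × ℝ), cs p k) : (ℝ × ℝ) × ℝ) ∈ S := ⟨hccb, hcsmem⟩
      have h3 : (((p, k), cs p₀ k₀) : (ℝ × ℝ) × ℝ) ∈ S := ⟨hqcb, hcq⟩
      have h4 : ((((p₀, k₀) : ℝ × ℝ), cs p₀ k₀) : (ℝ × ℝ) × ℝ) ∈ S := ⟨hccb, hcq⟩
      have hd1 : dist ((((p, k), cs p k)) : (ℝ × ℝ) × ℝ)
          ((((p₀, k₀) : ℝ × ℝ), cs p k)) < δ₀ := by
        rw [Prod.dist_eq]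
        simp only [dist_self, max_lt_iff]
        exact ⟨hdq, hδ₀⟩
      have hd2 : dist ((((p, k), cs p₀ k₀)) : (ℝ × ℝ) × ℝ)
          ((((p₀, k₀) : ℝ × ℝ), cs p₀ k₀)) < δ₀ := by
        rw [Prod.dist_eq]
        simp only [dist_self, max_lt_iff]
        exact ⟨hdq, hδ₀⟩
      have hG1 : dist (F k (cs p k) * p + ur u (cs p k) k)
          (F k₀ (cs p k) * p₀ + ur u (cs p k) k₀) < η / 2 := hUCd _ h1 _ h2 hd1
      have hG2 : dist (F k (cs p₀ k₀) * p + ur u (cs p₀ k₀) k)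
          (F k₀ (cs p₀ k₀) * p₀ + ur u (cs p₀ k₀) k₀) < η / 2 := hUCd _ h3 _ h4 hd2
      rw [Real.dist_eq] at hG1 hG2
      have h5 := abs_lt.1 hG1
      have h6 := abs_lt.1 hG2
      have hgapc := hgap _ hmemD
      have hmaxc := (hcsP p k hp hk).2 (cs p₀ k₀) hc₀pos
      linarith [h5.1, h5.2, h6.1, h6.2]
    have hfin : cs p₀ k₀ - ε < cs p k ∧ cs p k < cs p₀ k₀ + ε := by
      have h : ¬(cs p k ≤ cs p₀ k₀ - ε ∨ cs p₀ k₀ + ε ≤ cs p k) := by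
        intro h
        exact hnotD ⟨hcsmem, by rcases h with h | h
                                · exact Or.inl h
                                · exact Or.inr h⟩
      push_neg at h
      exact h
    rw [Real.dist_eq, abs_lt]
    constructor <;> [linarith [hfin.1]; linarith [hfin.2]]
  · -- the Hamiltonian identity
    intro p k hp hk
    obtain ⟨hcpos, hmax⟩ := hcsP p k hp hk
    have hfin : u (cs p k) k = ((ur u (cs p k) k : ℝ) : EReal) := u_eq_ur hA2 hcpos hk
    rw [Ham]
    refine le_antisymm ?_ ?_
    · exact le_iSup (fun c : {c : ℝ // 0 ≤ c} =>
        ((F k c.1 * p : ℝ) : EReal) + u c.1 k) ⟨cs p k, hcpos.le⟩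
    · apply iSup_le
      rintro ⟨c, hc0⟩
      rcases eq_or_lt_of_le hc0 with h0 | h0
      · rcases eq_or_ne (u 0 k) ⊥ with hbot | hbot
        · show ((F k c * p : ℝ) : EReal) + u c k ≤ _
          rw [← h0, hbot, EReal.add_bot]
          exact bot_le
        · have hfin0 : u 0 k = (((u 0 k).toReal : ℝ) : EReal) :=
            (EReal.coe_toReal (hA2.ne_top 0 k) hbot).symm
          have htk : Tendsto (fun c : ℝ => ((k, c) : ℝ × ℝ)) (𝓝[>] (0:ℝ))
              (𝓝[posOrth] ((k, 0) : ℝ × ℝ)) := by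
            rw [tendsto_nhdsWithin_iff]
            constructor
            · exact ((continuous_const.prodMk continuous_id).tendsto 0).mono_left
                nhdsWithin_le_nhds
            · exact Filter.eventually_of_mem self_mem_nhdsWithin
                (fun c hc => ⟨hk.le, le_of_lt hc⟩)
          have hFt : Tendsto (fun c : ℝ => F k c) (𝓝[>] (0:ℝ)) (𝓝 (F k 0)) := by
            have h := Filter.Tendsto.comp (hA3.cont (k, 0) ⟨hk.le, le_rfl⟩) htk
            exact h
          have htk2 : Tendsto (fun c : ℝ => ((c, k) : ℝ × ℝ)) (𝓝[>] (0:ℝ))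
              (𝓝[posOrth] ((0, k) : ℝ × ℝ)) := by
            rw [tendsto_nhdsWithin_iff]
            constructor
            · exact ((continuous_id.prodMk continuous_const).tendsto 0).mono_left
                nhdsWithin_le_nhds
            · exact Filter.eventually_of_mem self_mem_nhdsWithin
                (fun c hc => ⟨le_of_lt hc, hk.le⟩)
          have hut : Tendsto (fun c : ℝ => u c k) (𝓝[>] (0:ℝ)) (𝓝 (u 0 k)) := by
            have h := Filter.Tendsto.comp (hA2.cont (0, k) ⟨le_rfl, hk.le⟩) htk2
            exact h
          have hurt : Tendsto (fun c : ℝ => ur u c k) (𝓝[>] (0:ℝ))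
              (𝓝 ((u 0 k).toReal)) :=
            (EReal.tendsto_toReal (hA2.ne_top 0 k) hbot).comp hut
          have hlim : Tendsto (fun c : ℝ => F k c * p + ur u c k) (𝓝[>] (0:ℝ))
              (𝓝 (F k 0 * p + (u 0 k).toReal)) := (hFt.mul tendsto_const_nhds).add hurt
          have hle : F k 0 * p + (u 0 k).toReal ≤
              F k (cs p k) * p + ur u (cs p k) k :=
            le_of_tendsto hlim (Filter.eventually_of_mem self_mem_nhdsWithin
              (fun c hc => hmax c hc))
          show ((F k c * p : ℝ) : EReal) + u c k ≤ _
          rw [← h0, hfin0, hfin, ← EReal.coe_add, ← EReal.coe_add]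
          exact EReal.coe_le_coe_iff.2 hle
      · show ((F k c * p : ℝ) : EReal) + u c k ≤ _
        rw [hfin, u_eq_ur hA2 h0 hk, ← EReal.coe_add, ← EReal.coe_add]
        exact EReal.coe_le_coe_iff.2 (hmax c h0)

end
end

section
/- Let Γ : ℝ₊₊ ⇉ ℝ be a nonempty-valued set-valued map, let h : ℝ₊₊ → ℝ be locally Lipschitz with y ≤ h(k) for every k ∈ ℝ₊₊ and y ∈ Γ(k), and fix k̄ > 0. Let k₁ : [0,T] → ℝ₊₊ be a solution of k̇(t) = h(k(t)), k(0) = k̄, and let k₂ : [0,T] → ℝ₊₊ be a solution of the differential inclusion k̇(t) ∈ Γ(k(t)), k(0) = k̄. Then k₁(t) ≥ k₂(t) for all t ∈ [0,T]. -/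
open MeasureTheory Real Set Filter Topology
open scoped ENNReal NNReal

noncomputable section

namespace MyAC

lemma abs_cont_pt {f : ℝ → ℝ} {a b : ℝ} (hf : AbsContOn f a b) {ε : ℝ} (hε : 0 < ε) :
    ∃ δ > (0:ℝ), ∀ x ∈ Set.Icc a b, ∀ y ∈ Set.Icc a b, |y - x| < δ → |f y - f x| < ε := by
  obtain ⟨δ, hδ, H⟩ := hf ε hε
  refine ⟨δ, hδ, fun x hx y hy hxy => ?_⟩
  rcases le_total x y with hle | hle
  · have := H 1 (fun _ => x) (fun _ => y) (fun _ => ⟨hx.1, hle, hy.2⟩)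
      (Subsingleton.pairwise)
      (by rw [Fin.sum_univ_one]; rwa [abs_of_nonneg (sub_nonneg.2 hle)] at hxy)
    simpa using this
  · have := H 1 (fun _ => y) (fun _ => x) (fun _ => ⟨hy.1, hle, hx.2⟩)
      (Subsingleton.pairwise)
      (by rw [Fin.sum_univ_one]
          rw [abs_sub_comm] at hxy
          rwa [abs_of_nonneg (sub_nonneg.2 hle)] at hxy)
    rw [Fin.sum_univ_one] at this
    rwa [abs_sub_comm]

lemma continuousOn {f : ℝ → ℝ} {a b : ℝ} (hf : AbsContOn f a b) :
    ContinuousOn f (Set.Icc a b) := by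
  intro x hx
  rw [Metric.continuousWithinAt_iff]
  intro ε hε
  obtain ⟨δ, hδ, H⟩ := abs_cont_pt hf hε
  exact ⟨δ, hδ, fun {y} hy hxy => by
    simpa [Real.dist_eq] using H x hx y hy (by simpa [Real.dist_eq] using hxy)⟩

lemma mono {f : ℝ → ℝ} {a b a' b' : ℝ} (hf : AbsContOn f a b)
    (ha : a ≤ a') (hb : b' ≤ b) : AbsContOn f a' b' := by
  intro ε hε
  obtain ⟨δ, hδ, H⟩ := hf ε hε
  exact ⟨δ, hδ, fun n s t hst hd hsum =>
    H n s t (fun i => ⟨ha.trans (hst i).1, (hst i).2.1, (hst i).2.2.trans hb⟩) hd hsum⟩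

lemma sub {f g : ℝ → ℝ} {a b : ℝ} (hf : AbsContOn f a b) (hg : AbsContOn g a b) :
    AbsContOn (fun t => f t - g t) a b := by
  intro ε hε
  obtain ⟨δ₁, hδ₁, H₁⟩ := hf (ε/2) (by linarith)
  obtain ⟨δ₂, hδ₂, H₂⟩ := hg (ε/2) (by linarith)
  refine ⟨min δ₁ δ₂, lt_min hδ₁ hδ₂, fun n s t hst hd hsum => ?_⟩
  have h1 := H₁ n s t hst hd (hsum.trans_le (min_le_left _ _))
  have h2 := H₂ n s t hst hd (hsum.trans_le (min_le_right _ _))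
  calc (∑ i, |(f (t i) - g (t i)) - (f (s i) - g (s i))|)
      ≤ ∑ i, (|f (t i) - f (s i)| + |g (t i) - g (s i)|) := by
        apply Finset.sum_le_sum; intro i _
        have : (f (t i) - g (t i)) - (f (s i) - g (s i)) =
          (f (t i) - f (s i)) - (g (t i) - g (s i)) := by ring
        rw [this]; exact abs_sub _ _
    _ = (∑ i, |f (t i) - f (s i)|) + ∑ i, |g (t i) - g (s i)| := Finset.sum_add_distrib
    _ < ε := by linarith

lemma linear {a b α : ℝ} : AbsContOn (fun t => α * t) a b := by
  intro ε hε
  refine ⟨ε / (|α| + 1), by positivity, fun n s t hst hd hsum => ?_⟩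
  calc (∑ i, |α * t i - α * s i|) = ∑ i, |α| * (t i - s i) := by
        apply Finset.sum_congr rfl; intro i _
        rw [← mul_sub, abs_mul,
          abs_of_nonneg (show (0:ℝ) ≤ t i - s i by linarith [(hst i).2.1])]
    _ = |α| * ∑ i, (t i - s i) := by rw [Finset.mul_sum]
    _ < ε := by
        have hs0 : (0:ℝ) ≤ ∑ i, (t i - s i) :=
          Finset.sum_nonneg fun i _ => by linarith [(hst i).2.1]
        have h1 : |α| * (∑ i, (t i - s i)) ≤ (|α| + 1) * (∑ i, (t i - s i)) := by
          apply mul_le_mul_of_nonneg_right _ hs0; linarith [abs_nonneg α]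
        have h2 : (|α| + 1) * (∑ i, (t i - s i)) < (|α| + 1) * (ε / (|α| + 1)) := by
          apply mul_lt_mul_of_pos_left hsum (by positivity)
        have : (|α| + 1) * (ε / (|α| + 1)) = ε := by field_simp
        linarith

lemma finset_form {f : ℝ → ℝ} {a b : ℝ} (hf : AbsContOn f a b) {ε : ℝ} (hε : 0 < ε) :
    ∃ δ > (0:ℝ), ∀ {ι : Type} (S : Finset ι) (x y : ι → ℝ),
      (∀ i ∈ S, a ≤ x i ∧ x i ≤ y i ∧ y i ≤ b) →
      ((S : Set ι).Pairwise fun i j => Disjoint (Set.Ioo (x i) (y i)) (Set.Ioo (x j) (y j))) →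
      (∑ i ∈ S, (y i - x i)) < δ → (∑ i ∈ S, |f (y i) - f (x i)|) < ε := by
  obtain ⟨δ, hδ, H⟩ := hf ε hε
  refine ⟨δ, hδ, fun {ι} S x y hmem hdisj hsum => ?_⟩
  classical
  set e : Fin S.card ≃ {i // i ∈ S} := S.equivFin.symm with he
  have hsum_eq : ∀ g : ι → ℝ, (∑ i ∈ S, g i) = ∑ j : Fin S.card, g (e j : ι) := by
    intro g
    rw [← Finset.sum_coe_sort S g]
    exact (Equiv.sum_comp e (fun i => g (i : ι))).symm
  have hlt : (∑ j : Fin S.card, (y (e j : ι) - x (e j : ι))) < δ := by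
    have h := hsum_eq (fun i => y i - x i)
    calc (∑ j : Fin S.card, (y (e j : ι) - x (e j : ι)))
        = ∑ i ∈ S, (y i - x i) := h.symm
      _ < δ := hsum
  have := H S.card (fun j => x (e j : ι)) (fun j => y (e j : ι))
    (fun j => hmem _ (e j).2)
    (fun i j hij => hdisj (e i).2 (e j).2
      (fun hcontra => hij (e.injective (Subtype.ext hcontra))))
    hlt
  calc (∑ i ∈ S, |f (y i) - f (x i)|)
      = ∑ j : Fin S.card, |f (y (e j : ι)) - f (x (e j : ι))| :=
        hsum_eq (fun i => |f (y i) - f (x i)|)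
    _ < ε := this

end MyAC

namespace MyAC

lemma luzinN {f : ℝ → ℝ} {a b : ℝ} (hab : a < b) (hf : AbsContOn f a b)
    {N : Set ℝ} (hN : N ⊆ Set.Icc a b) (h0 : volume N = 0) : volume (f '' N) = 0 := by
  have key : ∀ ε : ℝ, 0 < ε → volume (f '' N) ≤ ENNReal.ofReal ε := by
    intro ε hε
    obtain ⟨δ, hδ, H⟩ := finset_form hf (half_pos hε)
    set N' := N ∩ Set.Ioo a b with hN'def
    have hN'0 : volume N' = 0 :=
      le_antisymm ((measure_mono inter_subset_left).trans h0.le) zero_le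
    obtain ⟨U0, hU0sub, hU0open, hU0meas⟩ :=
      Set.exists_isOpen_lt_of_lt N' (ENNReal.ofReal δ)
        (by rw [hN'0]; exact ENNReal.ofReal_pos.2 hδ)
    set U := U0 ∩ Set.Ioo a b with hUdef
    have hUopen : IsOpen U := hU0open.inter isOpen_Ioo
    have hUsub : U ⊆ Set.Ioo a b := inter_subset_right
    have hN'U : N' ⊆ U := subset_inter hU0sub inter_subset_right
    have hUmeas : volume U < ENNReal.ofReal δ :=
      lt_of_le_of_lt (measure_mono inter_subset_left) hU0meas
    set C : Set (Set ℝ) :=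
      (fun q : ℚ => Set.ordConnectedComponent U (q : ℝ)) '' {q : ℚ | (q : ℝ) ∈ U} with hCdef
    have hCcount : C.Countable := (Set.to_countable _).image _
    have hCsubU : ∀ c ∈ C, c ⊆ U := by
      rintro _ ⟨q, hq, rfl⟩
      exact Set.ordConnectedComponent_subset
    have hCdisj : ∀ c ∈ C, ∀ c' ∈ C, c ≠ c' → Disjoint c c' := by
      rintro _ ⟨q, hq, rfl⟩ _ ⟨q', hq', rfl⟩ hne
      rw [Set.disjoint_left]
      intro z hz hz'
      have heq : Set.ordConnectedComponent U (q : ℝ) = Set.ordConnectedComponent U (q' : ℝ) := by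
        rw [Set.ordConnectedComponent_eq (Set.mem_ordConnectedComponent.1 hz),
          ← Set.ordConnectedComponent_eq (Set.mem_ordConnectedComponent.1 hz')]
      exact hne heq
    have hcover : N' ⊆ ⋃ c ∈ C, c := by
      intro t ht
      have htU : t ∈ U := hN'U ht
      obtain ⟨r, hr, hball⟩ := Metric.isOpen_iff.1 hUopen t htU
      obtain ⟨q, hq⟩ := exists_rat_near t hr
      have hqU : (q : ℝ) ∈ U := hball (by simpa [Real.dist_eq, abs_sub_comm] using hq)
      have htc : t ∈ Set.ordConnectedComponent U (q : ℝ) := by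
        rw [Set.mem_ordConnectedComponent]
        intro z hz
        apply hball
        rw [Metric.mem_ball, Real.dist_eq]
        have h1 : |t - (q : ℝ)| < r := hq
        have h2 : |z - t| ≤ |t - (q : ℝ)| := by
          rcases le_total (q : ℝ) t with hle | hle
          · rw [Set.uIcc_of_le hle] at hz
            rw [abs_of_nonpos (by linarith [hz.2] : z - t ≤ 0),
              abs_of_nonneg (by linarith : (0:ℝ) ≤ t - (q:ℝ))]
            linarith [hz.1]
          · rw [Set.uIcc_of_ge hle] at hz
            rw [abs_of_nonneg (by linarith [hz.1] : (0:ℝ) ≤ z - t),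
              abs_of_nonpos (by linarith : t - (q:ℝ) ≤ 0), neg_sub]
            linarith [hz.2]
        exact lt_of_le_of_lt h2 h1
      exact Set.mem_biUnion ⟨q, hqU, rfl⟩ htc
    -- data for each component
    have hdata : ∀ c ∈ C, ∃ u v : ℝ, a ≤ u ∧ u ≤ v ∧ v ≤ b ∧ Set.Ioo u v ⊆ c ∧
        volume (f '' c) ≤ ENNReal.ofReal |f v - f u| := by
      intro c hc
      have hcU : c ⊆ U := hCsubU c hc
      have hcne : c.Nonempty := by
        obtain ⟨q, hq, rfl⟩ := hc
        exact ⟨q, Set.self_mem_ordConnectedComponent.2 hq⟩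
      have hcOrd : c.OrdConnected := by
        obtain ⟨q, hq, rfl⟩ := hc; infer_instance
      have hclsub : closure c ⊆ Set.Icc a b := by
        calc closure c ⊆ closure (Set.Ioo a b) := closure_mono (hcU.trans hUsub)
          _ = Set.Icc a b := closure_Ioo hab.ne
      have hclcomp : IsCompact (closure c) :=
        IsCompact.of_isClosed_subset isCompact_Icc isClosed_closure hclsub
      have hclne : (closure c).Nonempty := hcne.closure
      have hfc : ContinuousOn f (closure c) := (continuousOn hf).mono hclsub
      obtain ⟨w₁, hw₁mem, hw₁⟩ := hclcomp.exists_isMinOn hclne hfc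
      obtain ⟨w₂, hw₂mem, hw₂⟩ := hclcomp.exists_isMaxOn hclne hfc
      have himg : f '' c ⊆ Set.Icc (f w₁) (f w₂) := by
        rintro _ ⟨z, hz, rfl⟩
        exact ⟨hw₁ (subset_closure hz), hw₂ (subset_closure hz)⟩
      have hIoosub : ∀ u v : ℝ, u ∈ closure c → v ∈ closure c → Set.Ioo u v ⊆ c := by
        intro u v hu hv z hz
        obtain ⟨z₁, hz₁⟩ := (_root_.mem_closure_iff.1 hu) (Set.Iio z) isOpen_Iio hz.1
        obtain ⟨z₂, hz₂⟩ := (_root_.mem_closure_iff.1 hv) (Set.Ioi z) isOpen_Ioi hz.2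
        exact hcOrd.out hz₁.2 hz₂.2 ⟨le_of_lt hz₁.1, le_of_lt hz₂.1⟩
      have hvol : volume (f '' c) ≤ ENNReal.ofReal (f w₂ - f w₁) := by
        calc volume (f '' c) ≤ volume (Set.Icc (f w₁) (f w₂)) := measure_mono himg
          _ = ENNReal.ofReal (f w₂ - f w₁) := Real.volume_Icc
      rcases le_total w₁ w₂ with h12 | h12
      · refine ⟨w₁, w₂, (hclsub hw₁mem).1, h12, (hclsub hw₂mem).2,
          hIoosub _ _ hw₁mem hw₂mem, ?_⟩
        exact hvol.trans (ENNReal.ofReal_le_ofReal (le_abs_self _))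
      · refine ⟨w₂, w₁, (hclsub hw₂mem).1, h12, (hclsub hw₁mem).2,
          hIoosub _ _ hw₂mem hw₁mem, ?_⟩
        refine hvol.trans (ENNReal.ofReal_le_ofReal ?_)
        rw [abs_sub_comm]
        exact le_abs_self _
    choose! u v hau huv hvb hIoo hvol using hdata
    have himgsub : volume (f '' N') ≤ ∑' c : ↥C, volume (f '' (c : Set ℝ)) := by
      calc volume (f '' N') ≤ volume (⋃ c ∈ C, f '' c) := by
            refine measure_mono ?_
            rw [← Set.image_iUnion₂]
            exact Set.image_mono hcover
        _ ≤ ∑' c : ↥C, volume (f '' (c : Set ℝ)) :=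
            measure_biUnion_le volume hCcount _
    have htsum : (∑' c : ↥C, volume (f '' (c : Set ℝ))) ≤ ENNReal.ofReal (ε / 2) := by
      rw [ENNReal.tsum_eq_iSup_sum]
      refine iSup_le fun S => ?_
      have hpair : ((S : Set ↥C).Pairwise fun c c' =>
          Disjoint (Set.Ioo (u (c : Set ℝ)) (v (c : Set ℝ)))
            (Set.Ioo (u (c' : Set ℝ)) (v (c' : Set ℝ)))) := by
        intro c _ c' _ hne
        exact Set.disjoint_of_subset (hIoo _ c.2) (hIoo _ c'.2)
          (hCdisj _ c.2 _ c'.2 (fun h => hne (Subtype.ext h)))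
      have hsumlt : (∑ c ∈ S, (v (c : Set ℝ) - u (c : Set ℝ))) < δ := by
        have hmeq := measure_biUnion_finset (μ := volume) hpair
          (fun c _ => measurableSet_Ioo)
        have hle : (∑ c ∈ S, volume (Set.Ioo (u (c : Set ℝ)) (v (c : Set ℝ)))) ≤ volume U := by
          rw [← hmeq]
          exact measure_mono (Set.iUnion₂_subset fun c _ => (hIoo _ c.2).trans (hCsubU _ c.2))
        have hsum_eq : (∑ c ∈ S, volume (Set.Ioo (u (c : Set ℝ)) (v (c : Set ℝ)))) =
            ENNReal.ofReal (∑ c ∈ S, (v (c : Set ℝ) - u (c : Set ℝ))) := by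
          rw [ENNReal.ofReal_sum_of_nonneg (fun c _ => sub_nonneg.2 (huv _ c.2))]
          exact Finset.sum_congr rfl fun c _ => Real.volume_Ioo
        rw [hsum_eq] at hle
        have h2 := lt_of_le_of_lt hle hUmeas
        exact (ENNReal.ofReal_lt_ofReal_iff_of_nonneg
          (Finset.sum_nonneg fun c _ => sub_nonneg.2 (huv _ c.2))).1 h2
      have hACsum := H S (fun c => u (c : Set ℝ)) (fun c => v (c : Set ℝ))
        (fun c _ => ⟨hau _ c.2, huv _ c.2, hvb _ c.2⟩) hpair hsumlt
      calc (∑ c ∈ S, volume (f '' (c : Set ℝ)))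
          ≤ ∑ c ∈ S, ENNReal.ofReal |f (v (c : Set ℝ)) - f (u (c : Set ℝ))| :=
            Finset.sum_le_sum fun c _ => hvol _ c.2
        _ = ENNReal.ofReal (∑ c ∈ S, |f (v (c : Set ℝ)) - f (u (c : Set ℝ))|) :=
            (ENNReal.ofReal_sum_of_nonneg (fun c _ => abs_nonneg _)).symm
        _ ≤ ENNReal.ofReal (ε / 2) := ENNReal.ofReal_le_ofReal hACsum.le
    have hsplit : f '' N ⊆ f '' N' ∪ ({f a} ∪ {f b}) := by
      rintro _ ⟨t, ht, rfl⟩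
      by_cases h' : t ∈ Set.Ioo a b
      · exact Or.inl ⟨t, ⟨ht, h'⟩, rfl⟩
      · have hmem := hN ht
        rcases eq_or_lt_of_le hmem.1 with h1 | h1
        · exact Or.inr (Or.inl (by rw [← h1]; rfl))
        rcases eq_or_lt_of_le hmem.2 with h2 | h2
        · exact Or.inr (Or.inr (by rw [h2]; rfl))
        exact absurd ⟨h1, h2⟩ h'
    calc volume (f '' N) ≤ volume (f '' N') + volume ({f a} ∪ {f b} : Set ℝ) :=
          (measure_mono hsplit).trans (measure_union_le _ _)
      _ ≤ ENNReal.ofReal (ε / 2) + 0 := by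
          refine add_le_add (himgsub.trans htsum) ?_
          rw [measure_union_null (measure_singleton _) (measure_singleton _)]
      _ ≤ ENNReal.ofReal ε := by
          rw [add_zero]
          exact ENNReal.ofReal_le_ofReal (by linarith)
  refine le_antisymm ?_ zero_le
  refine ENNReal.le_of_forall_pos_le_add (fun η hη _ => ?_)
  rw [zero_add]
  calc volume (f '' N) ≤ ENNReal.ofReal ((η : ℝ)) := key _ (by exact_mod_cast hη)
    _ = (η : ℝ≥0∞) := ENNReal.ofReal_coe_nnreal

end MyAC

namespace MyAC

lemma growth {f : ℝ → ℝ} {a b C : ℝ} (hab : a < b) (hf : AbsContOn f a b)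
    {N : Set ℝ} (hNvol : volume N = 0)
    (hd : ∀ t ∈ Set.Icc a b, t ∉ N → ∃ d ≤ C, HasDerivAt f d t) :
    f b - f a ≤ C * (b - a) := by
  have key : ∀ ε : ℝ, 0 < ε → f b - f a ≤ (C + ε) * (b - a) := by
    intro ε hε
    set φ : ℝ → ℝ := fun t => f t - (C + ε) * t with hφdef
    have hφAC : AbsContOn φ a b := sub hf linear
    have hφcont : ContinuousOn φ (Set.Icc a b) := continuousOn hφAC
    have hmain : φ b ≤ φ a := by
      by_contra hcon
      push_neg at hcon
      have hsub : Set.Ioo (φ a) (φ b) ⊆ φ '' (N ∩ Set.Icc a b) := by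
        rintro y ⟨hy1, hy2⟩
        set S := Set.Icc a b ∩ φ ⁻¹' {y} with hSdef
        have hSne : S.Nonempty := by
          obtain ⟨t, ht, hφt⟩ := intermediate_value_Icc hab.le hφcont ⟨hy1.le, hy2.le⟩
          exact ⟨t, ht, hφt⟩
        have hSclosed : IsClosed S :=
          hφcont.preimage_isClosed_of_isClosed isClosed_Icc isClosed_singleton
        have hScomp : IsCompact S :=
          IsCompact.of_isClosed_subset isCompact_Icc hSclosed inter_subset_left
        set s := sSup S with hsdef
        have hsS : s ∈ S := hScomp.sSup_mem hSne
        have hsIcc : s ∈ Set.Icc a b := hsS.1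
        have hφs : φ s = y := hsS.2
        have hsb : s < b :=
          lt_of_le_of_ne hsIcc.2 (fun h => by rw [h] at hφs; linarith)
        have hgt : ∀ t ∈ Set.Ioc s b, y < φ t := by
          rintro t ⟨hst, htb⟩
          have htIcc : t ∈ Set.Icc a b := ⟨hsIcc.1.trans hst.le, htb⟩
          rcases lt_trichotomy (φ t) y with h | h | h
          · obtain ⟨t', ht', hφt'⟩ := intermediate_value_Icc htb
              (hφcont.mono (Set.Icc_subset_Icc htIcc.1 le_rfl)) ⟨h.le, hy2.le⟩
            have ht'S : t' ∈ S := ⟨⟨htIcc.1.trans ht'.1, ht'.2⟩, hφt'⟩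
            have := le_csSup hScomp.bddAbove ht'S
            have := ht'.1
            linarith
          · exact absurd (le_csSup hScomp.bddAbove (show t ∈ S from ⟨htIcc, h⟩)) (not_le.2 hst)
          · exact h
        have hsN : s ∈ N := by
          by_contra hsN
          obtain ⟨d, hdC, hder⟩ := hd s hsIcc hsN
          have hφd : HasDerivAt φ (d - (C + ε)) s := by
            exact (hder.sub ((hasDerivAt_id s).const_mul (C + ε))).congr_deriv (by ring)
          have hslope : Tendsto (slope φ s) (𝓝[>] s) (𝓝 (d - (C + ε))) := by
            have h' : HasDerivWithinAt φ (d - (C + ε)) (Set.Ioi s) s :=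
              hφd.hasDerivWithinAt
            rwa [hasDerivWithinAt_iff_tendsto_slope' (Set.notMem_Ioi_self)] at h'
          have hge : 0 ≤ d - (C + ε) := by
            refine ge_of_tendsto hslope ?_
            filter_upwards [Ioc_mem_nhdsGT hsb] with t ht
            rw [slope_def_field]
            exact div_nonneg (by linarith [hgt t ht, hφs]) (by linarith [ht.1])
          linarith
        exact ⟨s, ⟨hsN, hsIcc⟩, hφs⟩
      have h1 : volume (Set.Ioo (φ a) (φ b)) ≤ volume (φ '' (N ∩ Set.Icc a b)) :=
        measure_mono hsub
      have h2 : volume (φ '' (N ∩ Set.Icc a b)) = 0 :=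
        luzinN hab hφAC inter_subset_right
          (le_antisymm ((measure_mono inter_subset_left).trans hNvol.le) zero_le)
      rw [Real.volume_Ioo, h2] at h1
      have h3 : (0 : ℝ≥0∞) < ENNReal.ofReal (φ b - φ a) :=
        ENNReal.ofReal_pos.2 (sub_pos.2 hcon)
      exact absurd h1 (not_le.2 h3)
    have hexp : φ b = f b - (C + ε) * b := rfl
    have hexp' : φ a = f a - (C + ε) * a := rfl
    rw [hexp, hexp'] at hmain
    linarith [mul_sub (C + ε) b a]
  refine le_of_forall_pos_le_add (fun ε' hε' => ?_)
  have hba : 0 < b - a := sub_pos.2 hab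
  have := key (ε' / (b - a)) (div_pos hε' hba)
  calc f b - f a ≤ (C + ε' / (b - a)) * (b - a) := this
    _ = C * (b - a) + ε' := by field_simp
end MyAC

/-- **Lemma 5.** Comparison between a solution of the ODE `k' = h(k)` and a solution of the
differential inclusion `k' ∈ Γ(k)` when `Γ(k)` lies below `h(k)`. -/
theorem inclusion_comparison (Γ : ℝ → Set ℝ) (h : ℝ → ℝ) (kbar T : ℝ) (k₁ k₂ : ℝ → ℝ)
    (hΓne : ∀ x : ℝ, 0 < x → (Γ x).Nonempty)
    (hlip : ∀ x : ℝ, 0 < x → ∃ s ∈ 𝓝 x, ∃ K : NNReal, LipschitzOnWith K h s)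
    (hdom : ∀ x y : ℝ, 0 < x → y ∈ Γ x → y ≤ h x)
    (hkbar : 0 < kbar) (hT : 0 < T)
    (h₁ : SolvesODEOn h kbar k₁ (Set.Icc 0 T))
    (h₂ : SolvesInclOn Γ kbar k₂ (Set.Icc 0 T)) :
    ∀ t ∈ Set.Icc (0:ℝ) T, k₂ t ≤ k₁ t := by
  have hmemT : (0:ℝ) ∈ Set.Icc (0:ℝ) T := Set.left_mem_Icc.2 hT.le
  have hmemT' : T ∈ Set.Icc (0:ℝ) T := Set.right_mem_Icc.2 hT.le
  have hAC₁ : AbsContOn k₁ 0 T := h₁.locAC 0 T hmemT hmemT' hT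
  have hAC₂ : AbsContOn k₂ 0 T := h₂.locAC 0 T hmemT hmemT' hT
  have hc₁ : ContinuousOn k₁ (Set.Icc 0 T) := MyAC.continuousOn hAC₁
  have hc₂ : ContinuousOn k₂ (Set.Icc 0 T) := MyAC.continuousOn hAC₂
  set g : ℝ → ℝ := fun t => k₂ t - k₁ t with hgdef
  have hgc : ContinuousOn g (Set.Icc 0 T) := hc₂.sub hc₁
  have hg0 : g 0 = 0 := by simp [hgdef, h₁.init, h₂.init]
  by_contra hcontra
  push_neg at hcontra
  obtain ⟨t₀, ht₀, hlt⟩ := hcontra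
  have hgt₀ : 0 < g t₀ := sub_pos.2 hlt
  set S := Set.Icc 0 t₀ ∩ g ⁻¹' (Set.Iic 0) with hSdef
  have hg0T : ContinuousOn g (Set.Icc 0 t₀) := hgc.mono (Set.Icc_subset_Icc le_rfl ht₀.2)
  have hSne : S.Nonempty := ⟨0, ⟨le_rfl, ht₀.1⟩, by simp [hg0]⟩
  have hSclosed : IsClosed S :=
    hg0T.preimage_isClosed_of_isClosed isClosed_Icc isClosed_Iic
  have hScomp : IsCompact S :=
    IsCompact.of_isClosed_subset isCompact_Icc hSclosed inter_subset_left
  set c := sSup S with hcdef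
  have hcS : c ∈ S := hScomp.sSup_mem hSne
  have hcIcc : c ∈ Set.Icc 0 t₀ := hcS.1
  have hgc0 : g c ≤ 0 := hcS.2
  have hct₀ : c < t₀ := lt_of_le_of_ne hcIcc.2 (fun heq => by rw [heq] at hgc0; linarith)
  have hcT : c ∈ Set.Icc (0:ℝ) T := ⟨hcIcc.1, hcIcc.2.trans ht₀.2⟩
  have hgpos : ∀ t ∈ Set.Ioc c t₀, 0 < g t := by
    rintro t ⟨hct, htt₀⟩
    by_contra hle
    push_neg at hle
    exact absurd
      (le_csSup hScomp.bddAbove (show t ∈ S from ⟨⟨hcIcc.1.trans hct.le, htt₀⟩, hle⟩))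
      (not_le.2 hct)
  have hgceq : g c = 0 := by
    refine le_antisymm hgc0 ?_
    have h2 : ContinuousWithinAt g (Set.Ioc c t₀) c :=
      (hgc c hcT).mono (fun t ht => ⟨hcIcc.1.trans ht.1.le, ht.2.trans ht₀.2⟩)
    have h3 : Tendsto g (𝓝[>] c) (𝓝 (g c)) := by
      have := h2.tendsto
      rwa [nhdsWithin_Ioc_eq_nhdsGT hct₀] at this
    refine ge_of_tendsto h3 ?_
    filter_upwards [Ioc_mem_nhdsGT hct₀] with t ht using (hgpos t ht).le
  set x₀ := k₁ c with hx₀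
  have hx₀pos : 0 < x₀ := h₁.pos c hcT
  obtain ⟨s, hs, K, hK⟩ := hlip x₀ hx₀pos
  obtain ⟨r, hr, hball⟩ := Metric.mem_nhds_iff.1 hs
  have hk₂c : k₂ c = x₀ := by
    have : k₂ c - k₁ c = 0 := hgceq
    rw [hx₀]; linarith
  have hcw₁ := hc₁ c hcT
  have hcw₂ := hc₂ c hcT
  rw [Metric.continuousWithinAt_iff] at hcw₁ hcw₂
  obtain ⟨δ₁, hδ₁, H₁⟩ := hcw₁ r hr
  obtain ⟨δ₂, hδ₂, H₂⟩ := hcw₂ r hr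
  have hKpos : (0:ℝ) < (K:ℝ) + 1 := by positivity
  set b := min (c + min δ₁ δ₂ / 2) (min t₀ (c + 1 / (2 * ((K:ℝ) + 1)))) with hbdef
  have hδmin : 0 < min δ₁ δ₂ := lt_min hδ₁ hδ₂
  have hcb : c < b :=
    lt_min (by linarith) (lt_min hct₀ (lt_add_of_pos_right c (by positivity)))
  have hbt₀ : b ≤ t₀ := le_trans (min_le_right _ _) (min_le_left _ _)
  have hbT : b ≤ T := hbt₀.trans ht₀.2
  have hKb : (K:ℝ) * (b - c) ≤ 1/2 := by
    have h1 : b - c ≤ 1 / (2 * ((K:ℝ) + 1)) := by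
      have h2 : b ≤ c + 1 / (2 * ((K:ℝ) + 1)) :=
        le_trans (min_le_right _ _) (min_le_right _ _)
      linarith
    have h3 : (K:ℝ) * (b - c) ≤ (K:ℝ) * (1 / (2 * ((K:ℝ) + 1))) :=
      mul_le_mul_of_nonneg_left h1 K.2
    have h4 : (K:ℝ) * (1 / (2 * ((K:ℝ) + 1))) ≤ 1/2 := by
      rw [mul_one_div, div_le_div_iff₀ (by positivity) (by norm_num : (0:ℝ) < 2)]
      nlinarith [K.2]
    linarith
  have hmemball : ∀ t ∈ Set.Icc c b, k₁ t ∈ s ∧ k₂ t ∈ s := by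
    rintro t ⟨hct', htb⟩
    have htT : t ∈ Set.Icc (0:ℝ) T := ⟨hcIcc.1.trans hct', htb.trans hbT⟩
    have hdist : dist t c < min δ₁ δ₂ := by
      rw [Real.dist_eq, abs_of_nonneg (sub_nonneg.2 hct')]
      have hble : b ≤ c + min δ₁ δ₂ / 2 := min_le_left _ _
      linarith
    constructor
    · exact hball (H₁ htT (hdist.trans_le (min_le_left _ _)))
    · apply hball
      have := H₂ htT (hdist.trans_le (min_le_right _ _))
      rwa [hk₂c] at this
  obtain ⟨tm, htm, hmax⟩ := isCompact_Icc.exists_isMaxOn (Set.nonempty_Icc.2 hcb.le)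
    (hgc.mono (Set.Icc_subset_Icc hcIcc.1 hbT))
  set G := g tm with hGdef
  have hGpos : 0 < G := lt_of_lt_of_le (hgpos b ⟨hcb, hbt₀⟩) (hmax ⟨hcb.le, le_rfl⟩)
  have hctm : c < tm := by
    rcases lt_or_eq_of_le htm.1 with hlt' | heq
    · exact hlt'
    · exfalso
      have : g tm = 0 := by rw [← heq]; exact hgceq
      rw [hGdef] at hGpos
      linarith
  set P : ℝ → Prop := fun t =>
    (t ∈ Set.Icc (0:ℝ) T → HasDerivAt k₁ (h (k₁ t)) t) ∧
    (t ∈ Set.Icc (0:ℝ) T → ∃ d ∈ Γ (k₂ t), HasDerivAt k₂ d t) with hPdef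
  have hae : ∀ᵐ t, P t := h₁.hasDeriv.and h₂.hasDeriv
  rw [MeasureTheory.ae_iff] at hae
  have hACg : AbsContOn g c tm :=
    MyAC.sub (MyAC.mono hAC₂ hcIcc.1 (htm.2.trans hbT))
      (MyAC.mono hAC₁ hcIcc.1 (htm.2.trans hbT))
  have hgrow : g tm - g c ≤ ((K:ℝ) * G) * (tm - c) := by
    refine MyAC.growth hctm hACg hae ?_
    rintro t ⟨hct', httm⟩ hN
    have hPt : P t := not_not.1 hN
    have htT : t ∈ Set.Icc (0:ℝ) T := ⟨hcIcc.1.trans hct', (httm.trans htm.2).trans hbT⟩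
    obtain ⟨d, hdΓ, hder₂⟩ := hPt.2 htT
    have hder₁ := hPt.1 htT
    refine ⟨d - h (k₁ t), ?_, hder₂.sub hder₁⟩
    have hk₂pos := h₂.pos t htT
    have hdle : d ≤ h (k₂ t) := hdom _ _ hk₂pos hdΓ
    have htcb : t ∈ Set.Icc c b := ⟨hct', httm.trans htm.2⟩
    obtain ⟨hm₁, hm₂⟩ := hmemball t htcb
    have hlipt : |h (k₂ t) - h (k₁ t)| ≤ (K:ℝ) * |k₂ t - k₁ t| := by
      have := hK.dist_le_mul (k₂ t) hm₂ (k₁ t) hm₁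
      rwa [Real.dist_eq, Real.dist_eq] at this
    have hgt0 : 0 ≤ g t := by
      rcases eq_or_lt_of_le hct' with heq | hlt'
      · rw [← heq]; exact hgceq.ge
      · exact (hgpos t ⟨hlt', (httm.trans htm.2).trans hbt₀⟩).le
    have hgtG : g t ≤ G := hmax htcb
    have habs : |k₂ t - k₁ t| = g t := abs_of_nonneg hgt0
    calc d - h (k₁ t) ≤ h (k₂ t) - h (k₁ t) := by linarith
      _ ≤ |h (k₂ t) - h (k₁ t)| := le_abs_self _
      _ ≤ (K:ℝ) * |k₂ t - k₁ t| := hlipt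
      _ = (K:ℝ) * g t := by rw [habs]
      _ ≤ (K:ℝ) * G := mul_le_mul_of_nonneg_left hgtG K.2
  have h2' : ((K:ℝ) * G) * (tm - c) ≤ ((K:ℝ) * G) * (b - c) :=
    mul_le_mul_of_nonneg_left (by linarith [htm.2]) (by positivity)
  have h3' : ((K:ℝ) * G) * (b - c) ≤ (1/2) * G := by nlinarith [hKb, hGpos.le, K.2]
  rw [hgceq] at hgrow
  rw [← hGdef] at hgrow
  have htest1 : G ≤ ↑K * G * (tm - c) := by linarith
  have htest2 : G ≤ 1 / 2 * G := le_trans (le_trans htest1 h2') h3'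
  clear_value G
  linarith [htest2, hGpos]

end
end
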